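/- arXiv:1603.06716 — 2 statements merged into one kernel-verified Lean document; each statement's English description precedes it below -/
import Mathlib

section
/- Consider the parity MDP with states {qI, qM, ua, ub, uc, wI, wa, wb, wc, v1, v2} and colors C(qI)=C(ua)=C(ub)=C(uc)=0, C(qM)=3, C(wI)=C(wa)=C(wb)=C(wc)=C(v1)=1, C(v2)=2; initial state qI; transitions: from qI the single action a leads to qM with probability 0.6 and to wI with probability 0.4; from qM action a leads to ua with probability 0.9 and to wa with probability 0.1, action b leads to ub with probability 0.8 and to wb with probability 0.2, action c leads to uc with probability 0.7 and to wc with probability 0.3, and action d leads to v2 with probability 0.6 and to v1 with probability 0.4; from ua the single action a leads to qM with probability 0.7 and to wa with probability 0.3; from ub the single action a leads to qM with probability 0.8 and to wb with probability 0.2; from uc the single action a leads to qM with probability 0.9 and to wc with probability 0.1; the states wI, wa, wb, wc, v1, v2 are absorbing (self-loop with probability 1). This parity MDP admits a finite-state 0.54-risk-averse policy (choosing at the successive visits to qM the actions a, b, c, d in this order), but it admits no positional 0.54-risk-averse policy. -/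
open scoped BigOperators

/-- A (finite) Markov decision process with partial transition function
`P : S × A → D(S) ∪ {⊥}` (represented via `Option`) and initial state `init`. -/
structure MDP (S A : Type) [Fintype S] [Fintype A] where
  P : S → A → Option (S → ℝ)
  init : S

/-- Well-formedness of an MDP: every defined `P s a` is a probability distribution,
and every state has at least one enabled action. -/
def MDP.WellFormed {S A : Type} [Fintype S] [Fintype A] (M : MDP S A) : Prop :=
  (∀ s a d, M.P s a = some d → (∀ s', 0 ≤ d s') ∧ ∑ s', d s' = 1) ∧
  (∀ s, ∃ a, M.P s a ≠ none)

/-- A parity MDP: an MDP together with a coloring of its states. -/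
structure ParityMDP (S A : Type) [Fintype S] [Fintype A] extends MDP S A where
  C : S → ℕ

/-- The transition kernel of an MDP as a real-valued function (`0` on disabled actions). -/
noncomputable def MDP.K {S A : Type} [Fintype S] [Fintype A] (M : MDP S A)
    (s : S) (a : A) (s' : S) : ℝ :=
  (M.P s a).elim 0 fun d => d s'

/-- A policy for an MDP: a map from finite histories to distributions over actions,
supported on actions enabled at the last state of the history. -/
structure MDP.Policy {S A : Type} [Fintype S] [Fintype A] (M : MDP S A) where
  f : List S → A → ℝ
  nonneg : ∀ h a, 0 ≤ f h a
  sum_one : ∀ h, ∑ a, f h a = 1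
  support : ∀ (h : List S) (s : S) (a : A), h.getLast? = some s → M.P s a = none → f h a = 0

/-- One-step probability, in the Markov chain over histories induced by kernel `K`
and (the action-distribution map) `fp`, of moving from history `h` to `h ++ [t']`. -/
noncomputable def stepP {T A : Type} [Fintype A] (K : T → A → T → ℝ)
    (fp : List T → A → ℝ) (h : List T) (t' : T) : ℝ :=
  h.getLast?.elim 0 fun t => ∑ a, fp h a * K t a t'

/-- Probability of the finite continuation `u` after history `h` in the induced chain. -/
noncomputable def contP {T A : Type} [Fintype A] (K : T → A → T → ℝ)
    (fp : List T → A → ℝ) : List T → List T → ℝ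
  | _, [] => 1
  | h, t' :: u => stepP K fp h t' * contP K fp (h ++ [t']) u

/-- `u` is a (nonempty) continuation of `h` hitting the set of histories `Tgt`
for the first time at its end. -/
def IsFirstHit {T : Type} (Tgt : Set (List T)) (h u : List T) : Prop :=
  u ≠ [] ∧ (h ++ u) ∈ Tgt ∧ ∀ v, v <+: u → v ≠ [] → v ≠ u → (h ++ v) ∉ Tgt

/-- Probability, from history `h`, of eventually reaching some proper extension of `h`
belonging to the set of histories `Tgt`, in the chain induced by `K` and `fp`. -/
noncomputable def reachP {T A : Type} [Fintype A] (K : T → A → T → ℝ)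
    (fp : List T → A → ℝ) (h : List T) (Tgt : Set (List T)) : ℝ :=
  ∑' u : {u : List T // IsFirstHit Tgt h u}, contP K fp h u.1

open scoped Classical in
/-- Probability, starting from state `t0`, of eventually visiting a state in `G`
(the start state itself counts). -/
noncomputable def visitP {T A : Type} [Fintype A] (K : T → A → T → ℝ)
    (fp : List T → A → ℝ) (t0 : T) (G : Set T) : ℝ :=
  if t0 ∈ G then 1 else reachP K fp [t0] {h | ∃ t, h.getLast? = some t ∧ t ∈ G}

/-- A policy over an arbitrary state space (used for derived/reachability MDPs
whose kernels are given directly). -/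
structure GPolicy (T A : Type) [Fintype A] where
  f : List T → A → ℝ
  nonneg : ∀ h a, 0 ≤ f h a
  sum_one : ∀ h, ∑ a, f h a = 1

/-- The optimal reachability value of state `t0` w.r.t. goal set `G`:
the supremum over policies of the probability of visiting `G` from `t0`. -/
noncomputable def valueP {T A : Type} [Fintype A] (K : T → A → T → ℝ)
    (G : Set T) (t0 : T) : ℝ :=
  ⨆ fp : GPolicy T A, visitP K fp.f t0 G

/-- `s'` is a possible successor of `s` in the MDP. -/
def MDP.IsStep {S A : Type} [Fintype S] [Fintype A] (M : MDP S A) (s s' : S) : Prop :=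
  ∃ a d, M.P s a = some d ∧ 0 < d s'

/-- `π` is an infinite trace of the MDP. -/
def MDP.IsInfTrace {S A : Type} [Fintype S] [Fintype A] (M : MDP S A) (π : ℕ → S) : Prop :=
  ∀ i, M.IsStep (π i) (π (i + 1))

/-- The prefix `π 0 … π n` of an infinite trace, as a list. -/
def prefixList {S : Type} (π : ℕ → S) (n : ℕ) : List S := (List.range (n + 1)).map π

/-- Along the infinite trace `π`, the labeling `l` strictly decreases at most `k` times. -/
def DecreasesAtMost {S : Type} (l : List S → ℕ) (π : ℕ → S) (k : ℕ) : Prop :=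
  ∀ n, ((Finset.range n).filter fun i => l (prefixList π (i + 1)) < l (prefixList π i)).card ≤ k

/-- The policy `fp`, with labelings `l` (goal colors) and `l'` (goal indicators),
is `p`-risk-averse for the parity MDP `M` from initial state `q`. -/
structure RiskAverseFrom {S A : Type} [Fintype S] [Fintype A] (M : ParityMDP S A)
    (fp : M.toMDP.Policy) (l : List S → ℕ) (l' : List S → Bool) (p : ℝ) (q : S) : Prop where
  /-- (1) there is `k` such that along every infinite trace, `l` decreases at most `k` times -/
  bounded : ∃ k, ∀ π : ℕ → S, π 0 = q → M.toMDP.IsInfTrace π → DecreasesAtMost l π k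
  /-- (2a) `l` is always even -/
  l_even : ∀ h : List S, Even (l h)
  /-- (2b) `l' h = true` implies the color of the last state is even and at least `l h` -/
  goal_label : ∀ (h : List S) (s : S), h.getLast? = some s → l' h = true →
    l h ≤ M.C s ∧ Even (M.C s)
  /-- (3) if the color of the last state is odd then it is smaller than `l h` -/
  odd_label : ∀ (h : List S) (s : S), h.getLast? = some s → Odd (M.C s) → M.C s < l h
  /-- (4) from the initial history and from every history labeled `true` by `l'`,
  some extension labeled `true` by `l'` is reached with probability at least `p` -/
  reach_goal : ∀ t : List S, t.head? = some q → (t = [q] ∨ l' t = true) →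
    p ≤ reachP M.toMDP.K fp.f t {h | l' h = true}

/-- The parity MDP `M` admits a `p`-risk-averse policy (from its initial state). -/
def AdmitsRA {S A : Type} [Fintype S] [Fintype A] (M : ParityMDP S A) (p : ℝ) : Prop :=
  ∃ (fp : M.toMDP.Policy) (l : List S → ℕ) (l' : List S → Bool),
    RiskAverseFrom M fp l l' p M.toMDP.init

/-- For risk level `p`, state `q` is `(k,c)`-winning: there is a `p`-risk-averse policy
from `q` with `l ε = c` along which goal colors decrease at most `k` times. -/
def kcWinning {S A : Type} [Fintype S] [Fintype A] (M : ParityMDP S A)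
    (p : ℝ) (k c : ℕ) (q : S) : Prop :=
  ∃ (fp : M.toMDP.Policy) (l : List S → ℕ) (l' : List S → Bool),
    RiskAverseFrom M fp l l' p q ∧ l [] = c ∧
    ∀ π : ℕ → S, π 0 = q → M.toMDP.IsInfTrace π → DecreasesAtMost l π k

/-- The least even upper bound on the colors occurring in the parity MDP. -/
noncomputable def cMaxEven {S A : Type} [Fintype S] [Fintype A] (M : ParityMDP S A) : ℕ :=
  sInf {n : ℕ | Even n ∧ ∀ s : S, M.C s ≤ n}

/-- A policy is finite-state if it is computed by a deterministic finite automaton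
(finite state set `Q`, transition function `δ`, initial state `q0`) reading the
history of MDP states, together with an output map `Q → D(A)`. -/
def MDP.Policy.IsFiniteState {S A : Type} [Fintype S] [Fintype A] {M : MDP S A}
    (fp : M.Policy) : Prop :=
  ∃ (Q : Type) (_ : Fintype Q) (δ : Q → S → Q) (q0 : Q) (out : Q → A → ℝ),
    ∀ h : List S, fp.f h = out (h.foldl δ q0)

/-- A policy is positional if its choice depends only on the last state of the history. -/
def MDP.Policy.IsPositional {S A : Type} [Fintype S] [Fintype A] {M : MDP S A}
    (fp : M.Policy) : Prop :=
  ∀ h₁ h₂ : List S, h₁.getLast? = h₂.getLast? → fp.f h₁ = fp.f h₂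

/-- States of the example parity MDP of Figure 3. -/
inductive St7 : Type
  | qI | qM | ua | ub | uc | wI | wa | wb | wc | v1 | v2
  deriving DecidableEq

instance : Fintype St7 where
  elems := {.qI, .qM, .ua, .ub, .uc, .wI, .wa, .wb, .wc, .v1, .v2}
  complete := by intro x; cases x <;> simp

/-- Actions of the example parity MDP of Figure 3. -/
inductive Act7 : Type
  | a | b | c | d
  deriving DecidableEq

instance : Fintype Act7 where
  elems := {.a, .b, .c, .d}
  complete := by intro x; cases x <;> simp

/-- The distribution putting probability `px` on `x` and `py` on `y`. -/
noncomputable def d2 {S : Type} [DecidableEq S] (x y : S) (px py : ℝ) : S → ℝ :=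
  fun s => (if s = x then px else 0) + (if s = y then py else 0)

/-- The Dirac distribution on `x`. -/
noncomputable def d1 {S : Type} [DecidableEq S] (x : S) : S → ℝ :=
  fun s => if s = x then 1 else 0

/-- Transition function of the example parity MDP of Figure 3. -/
noncomputable def P7 : St7 → Act7 → Option (St7 → ℝ)
  | .qI, .a => some (d2 .qM .wI 0.6 0.4)
  | .qI, _ => none
  | .qM, .a => some (d2 .ua .wa 0.9 0.1)
  | .qM, .b => some (d2 .ub .wb 0.8 0.2)
  | .qM, .c => some (d2 .uc .wc 0.7 0.3)
  | .qM, .d => some (d2 .v2 .v1 0.6 0.4)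
  | .ua, .a => some (d2 .qM .wa 0.7 0.3)
  | .ua, _ => none
  | .ub, .a => some (d2 .qM .wb 0.8 0.2)
  | .ub, _ => none
  | .uc, .a => some (d2 .qM .wc 0.9 0.1)
  | .uc, _ => none
  | .wI, .a => some (d1 .wI)
  | .wI, _ => none
  | .wa, .a => some (d1 .wa)
  | .wa, _ => none
  | .wb, .a => some (d1 .wb)
  | .wb, _ => none
  | .wc, .a => some (d1 .wc)
  | .wc, _ => none
  | .v1, .a => some (d1 .v1)
  | .v1, _ => none
  | .v2, .a => some (d1 .v2)
  | .v2, _ => none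

/-- Coloring of the example parity MDP of Figure 3. -/
def C7 : St7 → ℕ
  | .qI => 0 | .qM => 3 | .ua => 0 | .ub => 0 | .uc => 0
  | .wI => 1 | .wa => 1 | .wb => 1 | .wc => 1 | .v1 => 1 | .v2 => 2

/-- The example parity MDP of Figure 3. -/
noncomputable def M7 : ParityMDP St7 Act7 := { P := P7, init := .qI, C := C7 }

set_option linter.constructorNameAsVariable false
set_option maxHeartbeats 1000000

namespace Ex7

open St7 Act7

lemma sumA (g : Act7 → ℝ) : ∑ a, g a = g .a + g .b + g .c + g .d := by
  rw [show (Finset.univ : Finset Act7) = {.a, .b, .c, .d} from rfl]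
  simp [Finset.sum_insert, Finset.mem_insert]; ring

def h1 : List St7 := [qI, qM, ua]
def h2 : List St7 := [qI, qM, ua, qM, ub]
def h3 : List St7 := [qI, qM, ua, qM, ub, qM, uc]
def c9 : List St7 := [qI, qM, ua, qM, ub, qM, uc, qM, v2]

def gl (h : List St7) : Bool :=
  decide (h = h1) || decide (h = h2) || decide (h = h3) ||
    (decide (h.take 9 = c9) && (h.drop 9).all fun s => decide (s = v2))

def hch (n : ℕ) : List St7 := c9 ++ List.replicate n v2

lemma gl_hch (n : ℕ) : gl (hch n) = true := by
  unfold gl hch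
  have ht : (c9 ++ List.replicate n v2).take 9 = c9 := by
    rw [show (9 : ℕ) = c9.length from rfl, List.take_left]
  have hd : (c9 ++ List.replicate n v2).drop 9 = List.replicate n v2 := by
    rw [show (9 : ℕ) = c9.length from rfl, List.drop_left]
  simp [ht, hd, List.all_eq_true, List.eq_of_mem_replicate]

lemma gl_iff (h : List St7) : gl h = true ↔ h = h1 ∨ h = h2 ∨ h = h3 ∨ ∃ n, h = hch n := by
  constructor
  · unfold gl
    intro hg
    simp only [Bool.or_eq_true, Bool.and_eq_true, decide_eq_true_eq, List.all_eq_true] at hg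
    rcases hg with ((h|h)|h)|⟨ht, hd⟩
    · exact Or.inl h
    · exact Or.inr (Or.inl h)
    · exact Or.inr (Or.inr (Or.inl h))
    · refine Or.inr (Or.inr (Or.inr ⟨(h.drop 9).length, ?_⟩))
      have : h.drop 9 = List.replicate (h.drop 9).length v2 :=
        List.eq_replicate_iff.2 ⟨rfl, fun b hb => by simpa using hd b hb⟩
      conv_lhs => rw [← List.take_append_drop 9 h, ht, this]
      rfl
  · intro hg
    rcases hg with h|h|h|⟨n, h⟩ <;> subst h
    · rfl
    · rfl
    · rfl
    · exact gl_hch n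

end Ex7

namespace Ex7
open St7 Act7

lemma M7P : M7.toMDP.P = P7 := rfl

def δ7 : Fin 10 → St7 → Fin 10
  | 0, .qI => 1
  | 1, .qM => 2
  | 2, .ua => 3
  | 3, .qM => 4
  | 4, .ub => 5
  | 5, .qM => 6
  | 6, .uc => 7
  | 7, .qM => 8
  | _, _ => 9

def out7 : Fin 10 → Act7
  | 4 => .b | 6 => .c | 8 => .d | _ => .a

noncomputable def fpf (h : List St7) : Act7 → ℝ :=
  fun a => if a = out7 (h.foldl δ7 0) then 1 else 0

lemma P7a (s : St7) : ∃ d, P7 s .a = some d := by cases s <;> exact ⟨_, rfl⟩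

lemma out7_ne_qM : ∀ (q : Fin 10) (s : St7), s ≠ qM → out7 (δ7 q s) = .a := by decide

noncomputable def fp7 : M7.toMDP.Policy where
  f := fpf
  nonneg := by intro h a; unfold fpf; split <;> norm_num
  sum_one := by
    intro h; unfold fpf
    simp [Finset.sum_ite_eq']
  support := by
    intro h s a hlast hnone
    rw [M7P] at hnone
    have hsa : s ≠ qM := by
      rintro rfl; cases a <;> simp [P7] at hnone
    have ha : a ≠ .a := by
      rintro rfl; obtain ⟨d, hd⟩ := P7a s; rw [hd] at hnone; cases hnone
    have hh : h.dropLast ++ [s] = h := List.dropLast_append_getLast? s hlast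
    unfold fpf
    rw [← hh, List.foldl_append]
    simp only [List.foldl]
    simp [out7_ne_qM _ s hsa, ha]

end Ex7

namespace Ex7
open St7 Act7

lemma hch_succ (n : ℕ) : hch (n + 1) = hch n ++ [v2] := by
  unfold hch; rw [List.replicate_succ', ← List.append_assoc]

lemma hch_last (n : ℕ) : (hch n).getLast? = some v2 := by
  induction n with
  | zero => rfl
  | succ k ih => rw [hch_succ]; exact List.getLast?_concat

lemma hch_len (n : ℕ) : (hch n).length = 9 + n := by simp [hch, c9]; omega

noncomputable def lab (h : List St7) : ℕ :=
  if gl h = true then (if h.getLast? = some v2 then 2 else 0) else 4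

lemma lab_le4 (h : List St7) : lab h ≤ 4 := by
  unfold lab; split
  · split <;> omega
  · omega

lemma lab_even (h : List St7) : Even (lab h) := by
  unfold lab; split
  · split
    · exact ⟨1, rfl⟩
    · exact ⟨0, rfl⟩
  · exact ⟨2, rfl⟩

lemma lab_h1 : lab h1 = 0 := by rfl
lemma lab_h2 : lab h2 = 0 := by rfl
lemma lab_h3 : lab h3 = 0 := by rfl
lemma lab_hch (n : ℕ) : lab (hch n) = 2 := by
  unfold lab; rw [gl_hch, hch_last]; simp

lemma prefixList_succ {S : Type} (π : ℕ → S) (n : ℕ) :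
    prefixList π (n + 1) = prefixList π n ++ [π (n + 1)] := by
  simp [prefixList, List.range_succ]

lemma prefixList_len {S : Type} (π : ℕ → S) (n : ℕ) : (prefixList π n).length = n + 1 := by
  simp [prefixList]

lemma prefixList_last {S : Type} (π : ℕ → S) (n : ℕ) :
    (prefixList π n).getLast? = some (π n) := by
  cases n with
  | zero => rfl
  | succ k => rw [prefixList_succ]; exact List.getLast?_concat

lemma prefixList_head {S : Type} (π : ℕ → S) (n : ℕ) :
    (prefixList π n).head? = some (π 0) := by
  simp [prefixList, List.range_succ_eq_map]

lemma lab_dec_mem (π : ℕ → St7) (i : ℕ)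
    (hd : lab (prefixList π (i + 1)) < lab (prefixList π i)) :
    i ∈ ({1, 3, 5, 7} : Finset ℕ) := by
  have hgl : gl (prefixList π (i + 1)) = true := by
    by_contra hc
    have : lab (prefixList π (i + 1)) = 4 := by unfold lab; simp [hc]
    have := lab_le4 (prefixList π i)
    omega
  have hlen : (prefixList π (i + 1)).length = i + 2 := prefixList_len _ _
  rcases (gl_iff _).1 hgl with h | h | h | ⟨n, h⟩
  · rw [h] at hlen; simp [h1] at hlen; simp; omega
  · rw [h] at hlen; simp [h2] at hlen; simp; omega
  · rw [h] at hlen; simp [h3] at hlen; simp; omega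
  · rw [h, hch_len] at hlen
    cases n with
    | zero => simp; omega
    | succ j =>
      exfalso
      have hdl : prefixList π i = hch j := by
        have : (prefixList π i ++ [π (i + 1)]).dropLast = (hch j ++ [v2]).dropLast := by
          rw [← prefixList_succ, ← hch_succ, h]
        simpa [List.dropLast_concat] using this
      rw [hdl, lab_hch] at hd
      rw [h, lab_hch] at hd
      omega

lemma bounded7 (π : ℕ → St7) : DecreasesAtMost lab π 4 := by
  intro n
  have hsub : ((Finset.range n).filter fun i =>
      lab (prefixList π (i + 1)) < lab (prefixList π i)) ⊆ {1, 3, 5, 7} := by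
    intro i hi
    rw [Finset.mem_filter] at hi
    exact lab_dec_mem π i hi.2
  calc _ ≤ ({1, 3, 5, 7} : Finset ℕ).card := Finset.card_le_card hsub
    _ = 4 := by decide

end Ex7

namespace Ex7
open St7 Act7

lemma h1_last : h1.getLast? = some ua := rfl
lemma h2_last : h2.getLast? = some ub := rfl
lemma h3_last : h3.getLast? = some uc := rfl

lemma goal_label7 (h : List St7) (s : St7) (hl : h.getLast? = some s) (hg : gl h = true) :
    lab h ≤ C7 s ∧ Even (C7 s) := by
  rcases (gl_iff h).1 hg with hh | hh | hh | ⟨n, hh⟩ <;> subst hh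
  · rw [h1_last] at hl; cases hl; exact ⟨by rw [lab_h1, C7], ⟨0, rfl⟩⟩
  · rw [h2_last] at hl; cases hl; exact ⟨by rw [lab_h2, C7], ⟨0, rfl⟩⟩
  · rw [h3_last] at hl; cases hl; exact ⟨by rw [lab_h3, C7], ⟨0, rfl⟩⟩
  · rw [hch_last] at hl; cases hl; exact ⟨by rw [lab_hch, C7], ⟨1, rfl⟩⟩

lemma odd_label7 (h : List St7) (s : St7) (hl : h.getLast? = some s) (ho : Odd (C7 s)) :
    C7 s < lab h := by
  by_cases hg : gl h = true
  · exfalso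
    have := (goal_label7 h s hl hg).2
    exact (Nat.not_even_iff_odd.2 ho) this
  · have : lab h = 4 := by unfold lab; simp [hg]
    rw [this]
    cases s <;> simp [C7] <;> simp [C7, Nat.odd_iff] at ho

lemma ne_append_of_ne_nil {X : Type} {v w : List X} (hw : w ≠ []) : v ≠ v ++ w := by
  intro h
  apply hw
  have h2 : v ++ [] = v ++ w := by simpa using h
  exact (List.append_cancel_left h2).symm

lemma prefix1 {X : Type} {v : List X} {a : X} (h : v <+: [a]) : v = [] ∨ v = [a] := by
  obtain ⟨w, hw⟩ := h
  cases v with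
  | nil => exact Or.inl rfl
  | cons x v' =>
    simp at hw
    obtain ⟨rfl, hv', -⟩ := hw
    exact Or.inr (by rw [hv'])

lemma prefix2 {X : Type} {v : List X} {a b : X} (h : v <+: [a, b]) :
    v = [] ∨ v = [a] ∨ v = [a, b] := by
  obtain ⟨w, hw⟩ := h
  cases v with
  | nil => exact Or.inl rfl
  | cons x v' =>
    cases v' with
    | nil => simp at hw; exact Or.inr (Or.inl (by rw [hw.1]))
    | cons y v'' =>
      simp at hw
      obtain ⟨rfl, rfl, hv'', -⟩ := hw
      exact Or.inr (Or.inr (by rw [hv'']))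

lemma reachP_eq_single {T A : Type} [Fintype A] (K : T → A → T → ℝ)
    (fp : List T → A → ℝ) (t : List T) (Tgt : Set (List T)) (u0 : List T)
    (h0 : IsFirstHit Tgt t u0) (huniq : ∀ u, IsFirstHit Tgt t u → u = u0) :
    reachP K fp t Tgt = contP K fp t u0 := by
  unfold reachP
  exact tsum_eq_single (⟨u0, h0⟩ : {u // IsFirstHit Tgt t u})
    (fun b hb => absurd (Subtype.ext (huniq b.1 b.2)) hb)

lemma stepP_det (h : List St7) (s : St7) (t' : St7) (a0 : Act7)
    (hl : h.getLast? = some s) (hf : out7 (h.foldl δ7 0) = a0) :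
    stepP M7.toMDP.K fpf h t' = M7.toMDP.K s a0 t' := by
  unfold stepP fpf
  rw [hl]
  simp [hf, ite_mul, Finset.sum_ite_eq']

end Ex7

namespace Ex7
open St7 Act7

def Tgt7 : Set (List St7) := {h | gl h = true}

lemma mem_Tgt7 {h : List St7} : h ∈ Tgt7 ↔ gl h = true := Iff.rfl

lemma mem_Tgt7' {h : List St7} (hg : gl h = true) : h ∈ Tgt7 := hg

lemma not_mem_Tgt7 {h : List St7} (hg : gl h = false) : h ∉ Tgt7 := by
  simp [Tgt7, hg]

lemma FH1 : IsFirstHit Tgt7 [qI] [qM, ua] := by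
  refine ⟨by simp, mem_Tgt7' (by decide), ?_⟩
  intro v hv hne hneu
  rcases prefix2 hv with rfl | rfl | rfl
  · exact absurd rfl hne
  · exact not_mem_Tgt7 (by decide)
  · exact absurd rfl hneu

lemma U1 (u : List St7) (hu : IsFirstHit Tgt7 [qI] u) : u = [qM, ua] := by
  obtain ⟨hne, hmem, hmin⟩ := hu
  rcases (gl_iff _).1 hmem with h | h | h | ⟨n, h⟩
  · simp [h1] at h; rw [h]
  · exfalso
    simp [h2] at h; subst h
    exact hmin [qM, ua] ⟨[qM, ub], rfl⟩ (by simp) (by simp) (mem_Tgt7' (by decide))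
  · exfalso
    simp [h3] at h; subst h
    exact hmin [qM, ua] ⟨[qM, ub, qM, uc], rfl⟩ (by simp) (by simp) (mem_Tgt7' (by decide))
  · exfalso
    simp [hch, c9] at h; subst h
    exact hmin [qM, ua] ⟨[qM, ub, qM, uc, qM, v2] ++ List.replicate n v2, rfl⟩
      (by simp) (ne_append_of_ne_nil (by simp)) (mem_Tgt7' (by decide))

lemma FH2 : IsFirstHit Tgt7 h1 [qM, ub] := by
  refine ⟨by simp, mem_Tgt7' (by decide), ?_⟩
  intro v hv hne hneu
  rcases prefix2 hv with rfl | rfl | rfl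
  · exact absurd rfl hne
  · exact not_mem_Tgt7 (by decide)
  · exact absurd rfl hneu

lemma U2 (u : List St7) (hu : IsFirstHit Tgt7 h1 u) : u = [qM, ub] := by
  obtain ⟨hne, hmem, hmin⟩ := hu
  rcases (gl_iff _).1 hmem with h | h | h | ⟨n, h⟩
  · exfalso; simp [h1] at h; exact hne h
  · simp [h1, h2] at h; rw [h]
  · exfalso
    simp [h1, h3] at h; subst h
    exact hmin [qM, ub] ⟨[qM, uc], rfl⟩ (by simp) (by simp) (mem_Tgt7' (by decide))
  · exfalso
    simp [h1, hch, c9] at h; subst h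
    exact hmin [qM, ub] ⟨[qM, uc, qM, v2] ++ List.replicate n v2, rfl⟩
      (by simp) (ne_append_of_ne_nil (by simp)) (mem_Tgt7' (by decide))

lemma FH3 : IsFirstHit Tgt7 h2 [qM, uc] := by
  refine ⟨by simp, mem_Tgt7' (by decide), ?_⟩
  intro v hv hne hneu
  rcases prefix2 hv with rfl | rfl | rfl
  · exact absurd rfl hne
  · exact not_mem_Tgt7 (by decide)
  · exact absurd rfl hneu

lemma U3 (u : List St7) (hu : IsFirstHit Tgt7 h2 u) : u = [qM, uc] := by
  obtain ⟨hne, hmem, hmin⟩ := hu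
  rcases (gl_iff _).1 hmem with h | h | h | ⟨n, h⟩
  · exfalso; simp [h2, h1] at h
  · exfalso; simp [h2] at h; exact hne h
  · simp [h2, h3] at h; rw [h]
  · exfalso
    simp [h2, hch, c9] at h; subst h
    exact hmin [qM, uc] ⟨qM :: v2 :: List.replicate n v2, rfl⟩
      (by simp) (ne_append_of_ne_nil (by simp)) (mem_Tgt7' (by decide))

lemma FH4 : IsFirstHit Tgt7 h3 [qM, v2] := by
  refine ⟨by simp, mem_Tgt7' (by decide), ?_⟩
  intro v hv hne hneu
  rcases prefix2 hv with rfl | rfl | rfl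
  · exact absurd rfl hne
  · exact not_mem_Tgt7 (by decide)
  · exact absurd rfl hneu

lemma U4 (u : List St7) (hu : IsFirstHit Tgt7 h3 u) : u = [qM, v2] := by
  obtain ⟨hne, hmem, hmin⟩ := hu
  rcases (gl_iff _).1 hmem with h | h | h | ⟨n, h⟩
  · exfalso; simp [h3, h1] at h
  · exfalso; simp [h3, h2] at h
  · exfalso; simp [h3] at h; exact hne h
  · simp [h3, hch, c9] at h; subst h
    cases n with
    | zero => rfl
    | succ j =>
      exfalso
      rw [List.replicate_succ] at hmin
      exact hmin [qM, v2] ⟨v2 :: List.replicate j v2, rfl⟩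
        (by simp) (ne_append_of_ne_nil (by simp)) (mem_Tgt7' (by decide))

lemma FH5 (n : ℕ) : IsFirstHit Tgt7 (hch n) [v2] := by
  refine ⟨by simp, ?_, ?_⟩
  · show gl (hch n ++ [v2]) = true
    rw [← hch_succ]; exact gl_hch _
  · intro v hv hne hneu
    rcases prefix1 hv with rfl | rfl
    · exact absurd rfl hne
    · exact absurd rfl hneu

lemma U5 (n : ℕ) (u : List St7) (hu : IsFirstHit Tgt7 (hch n) u) : u = [v2] := by
  obtain ⟨hne, hmem, hmin⟩ := hu
  have hlen : (hch n ++ u).length = 9 + n + u.length := by simp [hch_len]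
  have hne' : u.length ≠ 0 := fun h0 => hne (List.length_eq_zero_iff.1 h0)
  rcases (gl_iff _).1 hmem with h | h | h | ⟨m, h⟩
  · exfalso; have := congrArg List.length h; rw [hlen] at this; simp [h1] at this; omega
  · exfalso; have := congrArg List.length h; rw [hlen] at this; simp [h2] at this; omega
  · exfalso; have := congrArg List.length h; rw [hlen] at this; simp [h3] at this; omega
  · have hm : m = n + u.length := by
      have := congrArg List.length h; rw [hlen, hch_len] at this; omega
    subst hm
    have hcan : List.replicate n v2 ++ u = List.replicate (n + u.length) v2 := by
      apply List.append_cancel_left (as := c9)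
      rw [← List.append_assoc]; exact h
    have hu2 : u = List.replicate u.length v2 := by
      rw [List.replicate_add] at hcan
      exact List.append_cancel_left hcan
    rcases hul : u.length with - | j
    · exact absurd (List.length_eq_zero_iff.1 hul) hne
    · cases j with
      | zero => rw [hu2, hul]; rfl
      | succ i =>
        exfalso
        refine hmin [v2] ?_ (by simp) ?_ ?_
        · rw [hu2, hul, List.replicate_succ]
          exact ⟨List.replicate (i + 1) v2, rfl⟩
        · intro hvu; rw [← hvu] at hul; simp at hul
        · show gl (hch n ++ [v2]) = true
          rw [← hch_succ]; exact gl_hch _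

end Ex7

namespace Ex7
open St7 Act7

lemma foldl9 (l : List St7) : List.foldl δ7 9 l = 9 := by
  induction l with
  | nil => rfl
  | cons a t ih =>
    have h : δ7 9 a = 9 := by revert a; decide
    show List.foldl δ7 (δ7 9 a) t = 9
    rw [h]; exact ih

lemma foldl_hch (n : ℕ) : (hch n).foldl δ7 0 = 9 := by
  unfold hch
  rw [List.foldl_append]
  have h : List.foldl δ7 0 c9 = 9 := by decide
  rw [h]; exact foldl9 _

lemma cp1 : contP M7.toMDP.K fpf [qI] [qM, ua] = 0.54 := by
  simp only [contP]
  rw [show [qI] ++ [qM] = [qI, qM] from rfl]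
  rw [stepP_det [qI] qI qM .a rfl (by decide),
    stepP_det [qI, qM] qM ua .a (by rfl) (by decide)]
  simp [MDP.K, M7, P7, d2]
  norm_num

lemma cp2 : contP M7.toMDP.K fpf h1 [qM, ub] = 0.56 := by
  simp only [contP]
  rw [show h1 ++ [qM] = [qI, qM, ua, qM] from rfl]
  rw [stepP_det h1 ua qM .a rfl (by decide),
    stepP_det [qI, qM, ua, qM] qM ub .b (by rfl) (by decide)]
  simp [MDP.K, M7, P7, d2]
  norm_num

lemma cp3 : contP M7.toMDP.K fpf h2 [qM, uc] = 0.56 := by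
  simp only [contP]
  rw [show h2 ++ [qM] = [qI, qM, ua, qM, ub, qM] from rfl]
  rw [stepP_det h2 ub qM .a rfl (by decide),
    stepP_det [qI, qM, ua, qM, ub, qM] qM uc .c (by rfl) (by decide)]
  simp [MDP.K, M7, P7, d2]
  norm_num

lemma cp4 : contP M7.toMDP.K fpf h3 [qM, v2] = 0.54 := by
  simp only [contP]
  rw [show h3 ++ [qM] = [qI, qM, ua, qM, ub, qM, uc, qM] from rfl]
  rw [stepP_det h3 uc qM .a rfl (by decide),
    stepP_det [qI, qM, ua, qM, ub, qM, uc, qM] qM v2 .d (by rfl) (by decide)]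
  simp [MDP.K, M7, P7, d2]
  norm_num

lemma cp5 (n : ℕ) : contP M7.toMDP.K fpf (hch n) [v2] = 1 := by
  simp only [contP]
  rw [stepP_det (hch n) v2 v2 .a (hch_last n) (by rw [foldl_hch]; decide)]
  simp [MDP.K, M7, P7, d1]

lemma pos7 : ∃ (fp : M7.toMDP.Policy) (l : List St7 → ℕ) (l' : List St7 → Bool),
    RiskAverseFrom M7 fp l l' 0.54 St7.qI ∧ fp.IsFiniteState := by
  refine ⟨fp7, lab, gl, ⟨?_, ?_, ?_, ?_, ?_⟩, ?_⟩
  · exact ⟨4, fun π _ _ => bounded7 π⟩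
  · exact lab_even
  · intro h s hl hg
    exact goal_label7 h s hl hg
  · intro h s hl ho
    exact odd_label7 h s hl ho
  · intro t ht hc
    have hTgt : {h : List St7 | gl h = true} = Tgt7 := rfl
    rcases hc with rfl | hg
    · show (0.54 : ℝ) ≤ reachP M7.toMDP.K fpf [qI] _
      rw [hTgt, reachP_eq_single _ _ _ _ _ FH1 U1, cp1]
    · rcases (gl_iff t).1 hg with rfl | rfl | rfl | ⟨n, rfl⟩
      · show (0.54 : ℝ) ≤ reachP M7.toMDP.K fpf h1 _
        rw [hTgt, reachP_eq_single _ _ _ _ _ FH2 U2, cp2]; norm_num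
      · show (0.54 : ℝ) ≤ reachP M7.toMDP.K fpf h2 _
        rw [hTgt, reachP_eq_single _ _ _ _ _ FH3 U3, cp3]; norm_num
      · show (0.54 : ℝ) ≤ reachP M7.toMDP.K fpf h3 _
        rw [hTgt, reachP_eq_single _ _ _ _ _ FH4 U4, cp4]
      · show (0.54 : ℝ) ≤ reachP M7.toMDP.K fpf (hch n) _
        rw [hTgt, reachP_eq_single _ _ _ _ _ (FH5 n) (U5 n), cp5]; norm_num
  · exact ⟨Fin 10, inferInstance, δ7, 0, fun q a => if a = out7 q then 1 else 0,
      fun h => rfl⟩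

end Ex7

namespace Ex7
open St7 Act7

lemma d2_prob {x y : St7} {px py : ℝ} (hx : 0 ≤ px) (hy : 0 ≤ py) (hs : px + py = 1) :
    (∀ s', 0 ≤ d2 x y px py s') ∧ ∑ s', d2 x y px py s' = 1 := by
  constructor
  · intro s'; unfold d2; split <;> split <;> norm_num [hx, hy]
    linarith
  · unfold d2
    rw [Finset.sum_add_distrib]
    simp [Finset.sum_ite_eq', hs]

lemma d1_prob (x : St7) : (∀ s', 0 ≤ d1 x s') ∧ ∑ s', d1 x s' = 1 := by
  constructor
  · intro s'; unfold d1; split <;> norm_num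
  · unfold d1; simp [Finset.sum_ite_eq']

lemma wf7 : M7.toMDP.WellFormed := by
  constructor
  · intro s a d hd
    rw [M7P] at hd
    cases s <;> cases a <;> simp only [P7, Option.some.injEq, reduceCtorEq] at hd <;>
      subst hd <;>
      first
        | exact d2_prob (by norm_num) (by norm_num) (by norm_num)
        | exact d1_prob _
  · intro s
    refine ⟨.a, ?_⟩
    rw [M7P]
    cases s <;> simp [P7]

end Ex7

namespace Ex7
open St7 Act7

instance : Inhabited St7 := ⟨St7.qI⟩

lemma K7_nonneg (s : St7) (a : Act7) (s' : St7) : 0 ≤ M7.toMDP.K s a s' := by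
  cases s <;> cases a <;>
    simp only [MDP.K, M7P, P7, Option.elim, d2, d1] <;>
    first
      | (split <;> split <;> norm_num)
      | (split <;> norm_num)
      | norm_num

lemma K7_sum_le (s : St7) (a : Act7) : ∑ s', M7.toMDP.K s a s' ≤ 1 := by
  cases s <;> cases a <;>
    simp only [MDP.K, M7P, P7, Option.elim] <;>
    first
      | simp
      | exact le_of_eq (d2_prob (by norm_num) (by norm_num) (by norm_num)).2
      | exact le_of_eq (d1_prob _).2

variable (fp : M7.toMDP.Policy)

lemma stepP_nn (h : List St7) (t' : St7) : 0 ≤ stepP M7.toMDP.K fp.f h t' := by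
  unfold stepP
  cases hl : h.getLast? with
  | none => simp
  | some s =>
    simp only [Option.elim]
    exact Finset.sum_nonneg fun a _ => mul_nonneg (fp.nonneg h a) (K7_nonneg s a t')

lemma contP_nn (u : List St7) : ∀ h, 0 ≤ contP M7.toMDP.K fp.f h u := by
  induction u with
  | nil => intro h; simp [contP]
  | cons t v ih =>
    intro h
    simp only [contP]
    exact mul_nonneg (stepP_nn fp h t) (ih (h ++ [t]))

lemma stepP_sum_le (h : List St7) (s : St7) (hl : h.getLast? = some s) :
    ∑ t', stepP M7.toMDP.K fp.f h t' ≤ 1 := by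
  unfold stepP
  rw [hl]
  simp only [Option.elim]
  rw [Finset.sum_comm]
  calc ∑ a, ∑ t', fp.f h a * M7.toMDP.K s a t'
      = ∑ a, fp.f h a * ∑ t', M7.toMDP.K s a t' := by
        refine Finset.sum_congr rfl fun a _ => ?_; rw [Finset.mul_sum]
    _ ≤ ∑ a, fp.f h a * 1 := by
        refine Finset.sum_le_sum fun a _ => ?_
        exact mul_le_mul_of_nonneg_left (K7_sum_le s a) (fp.nonneg h a)
    _ = 1 := by simp [fp.sum_one h]

lemma contP_sum_le (N : ℕ) : ∀ (F : Finset (List St7)), (∀ u ∈ F, u.length ≤ N) →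
    (∀ u ∈ F, ∀ v ∈ F, u <+: v → u = v) → ∀ (h : List St7) (s : St7), h.getLast? = some s →
    ∑ u ∈ F, contP M7.toMDP.K fp.f h u ≤ 1 := by
  induction N with
  | zero =>
    intro F hlen _ h s hl
    have hsub : F ⊆ {[]} := by
      intro u hu
      rw [Finset.mem_singleton]
      exact List.length_eq_zero_iff.1 (Nat.le_zero.1 (hlen u hu))
    rcases Finset.subset_singleton_iff.1 hsub with rfl | rfl
    · simp
    · simp [contP]
  | succ N ih =>
    intro F hlen hpf h s hl
    by_cases hnil : [] ∈ F
    · have hsub : F ⊆ {[]} := by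
        intro u hu
        rw [Finset.mem_singleton]
        exact (hpf [] hnil u hu ⟨u, rfl⟩).symm
      rcases Finset.subset_singleton_iff.1 hsub with rfl | rfl
      · simp
      · simp [contP]
    · rw [← Finset.sum_fiberwise_of_maps_to (g := fun u => u.headI)
        (fun u _ => Finset.mem_univ u.headI) (contP M7.toMDP.K fp.f h)]
      have key : ∀ t' : St7,
          ∑ u ∈ F.filter (fun u => u.headI = t'), contP M7.toMDP.K fp.f h u
            ≤ stepP M7.toMDP.K fp.f h t' := by
        intro t'
        set Ft := F.filter (fun u => u.headI = t') with hFt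
        have hcons : ∀ u ∈ Ft, u = t' :: u.tail := by
          intro u hu
          rw [Finset.mem_filter] at hu
          rcases u with - | ⟨x, w⟩
          · exact absurd hu.1 hnil
          · simp at hu; rw [hu.2]; simp
        have hinj : ∀ u ∈ Ft, ∀ v ∈ Ft, u.tail = v.tail → u = v := by
          intro u hu v hv htails
          rw [hcons u hu, hcons v hv, htails]
        have himg : ∑ w ∈ Ft.image List.tail, contP M7.toMDP.K fp.f h (t' :: w)
            = ∑ u ∈ Ft, contP M7.toMDP.K fp.f h u := by
          rw [Finset.sum_image hinj]
          exact Finset.sum_congr rfl fun u hu => by rw [← hcons u hu]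
        rw [← himg]
        have : ∀ w, contP M7.toMDP.K fp.f h (t' :: w)
            = stepP M7.toMDP.K fp.f h t' * contP M7.toMDP.K fp.f (h ++ [t']) w := fun w => rfl
        simp only [this]
        rw [← Finset.mul_sum]
        have htail_le : ∑ w ∈ Ft.image List.tail, contP M7.toMDP.K fp.f (h ++ [t']) w ≤ 1 := by
          refine ih (Ft.image List.tail) ?_ ?_ (h ++ [t']) t' (List.getLast?_concat)
          · intro w hw
            obtain ⟨u, hu, rfl⟩ := Finset.mem_image.1 hw
            have hl1 := hlen u (Finset.mem_filter.1 hu).1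
            have hl2 : u.tail.length = u.length - 1 := List.length_tail
            have hl3 : u ≠ [] := fun h0 => hnil (h0 ▸ (Finset.mem_filter.1 hu).1)
            have hl4 : u.length ≠ 0 := fun h0 => hl3 (List.length_eq_zero_iff.1 h0)
            omega
          · intro w hw w' hw' hpre
            obtain ⟨u, hu, rfl⟩ := Finset.mem_image.1 hw
            obtain ⟨u', hu', rfl⟩ := Finset.mem_image.1 hw'
            have h1 : u <+: u' := by
              rw [hcons u hu, hcons u' hu']
              exact List.cons_prefix_cons.2 ⟨rfl, hpre⟩
            have := hpf u (Finset.mem_filter.1 hu).1 u' (Finset.mem_filter.1 hu').1 h1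
            rw [this]
        calc stepP M7.toMDP.K fp.f h t' * ∑ w ∈ Ft.image List.tail,
              contP M7.toMDP.K fp.f (h ++ [t']) w
            ≤ stepP M7.toMDP.K fp.f h t' * 1 :=
              mul_le_mul_of_nonneg_left htail_le (stepP_nn fp h t')
          _ = stepP M7.toMDP.K fp.f h t' := mul_one _
      calc ∑ t', ∑ u ∈ F.filter (fun u => u.headI = t'), contP M7.toMDP.K fp.f h u
          ≤ ∑ t', stepP M7.toMDP.K fp.f h t' := Finset.sum_le_sum fun t' _ => key t'
        _ ≤ 1 := stepP_sum_le fp h s hl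

end Ex7

namespace Ex7
open St7 Act7

lemma firstHit_pf {Tgt : Set (List St7)} {h u v : List St7}
    (hu : IsFirstHit Tgt h u) (hv : IsFirstHit Tgt h v) (hpre : u <+: v) : u = v := by
  by_contra hne
  exact hv.2.2 u hpre hu.1 hne hu.2.1

variable (fp : M7.toMDP.Policy)

lemma sum_fh_le (F : Finset (List St7)) (Tgt : Set (List St7)) (h : List St7) (s : St7)
    (hl : h.getLast? = some s) (hF : ∀ u ∈ F, IsFirstHit Tgt h u) :
    ∑ u ∈ F, contP M7.toMDP.K fp.f h u ≤ 1 := by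
  refine contP_sum_le fp (F.sup List.length) F (fun u hu => Finset.le_sup hu) ?_ h s hl
  intro u hu v hv hpre
  exact firstHit_pf (hF u hu) (hF v hv) hpre

lemma reach_summable (Tgt : Set (List St7)) (h : List St7) (s : St7)
    (hl : h.getLast? = some s) :
    Summable (fun u : {u : List St7 // IsFirstHit Tgt h u} => contP M7.toMDP.K fp.f h u.1) := by
  refine summable_of_sum_le (c := 1) (fun u => contP_nn fp u.1 h) ?_
  intro Fs
  rw [← Finset.sum_image (g := fun u : {u : List St7 // IsFirstHit Tgt h u} => u.1)
    (fun x _ y _ hxy => Subtype.ext hxy)]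
  refine sum_fh_le fp _ Tgt h s hl ?_
  intro u hu
  obtain ⟨⟨u', hu'⟩, -, rfl⟩ := Finset.mem_image.1 hu
  exact hu'

lemma reach_pos_elt (Tgt : Set (List St7)) (h : List St7)
    (hp : (0.54 : ℝ) ≤ reachP M7.toMDP.K fp.f h Tgt) :
    ∃ u, IsFirstHit Tgt h u ∧ 0 < contP M7.toMDP.K fp.f h u := by
  by_contra hc
  push_neg at hc
  have hz : ∀ u : {u : List St7 // IsFirstHit Tgt h u}, contP M7.toMDP.K fp.f h u.1 = 0 :=
    fun u => le_antisymm (hc u.1 u.2) (contP_nn fp u.1 h)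
  have : reachP M7.toMDP.K fp.f h Tgt = 0 := by
    unfold reachP
    rw [tsum_congr hz]
    exact tsum_zero
  rw [this] at hp
  norm_num at hp

lemma absorbP (s : St7) (habs : ∀ a t, M7.toMDP.K s a t ≠ 0 → t = s) :
    ∀ (u h : List St7), h.getLast? = some s → contP M7.toMDP.K fp.f h u ≠ 0 → u ≠ [] →
      u.getLast? = some s := by
  intro u
  induction u with
  | nil => intro h _ _ hne; exact absurd rfl hne
  | cons t v ih =>
    intro h hl hc _
    simp only [contP] at hc
    have hstep : stepP M7.toMDP.K fp.f h t ≠ 0 := fun h0 => hc (by rw [h0, zero_mul])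
    have hts : t = s := by
      unfold stepP at hstep
      rw [hl] at hstep
      simp only [Option.elim] at hstep
      obtain ⟨a, -, ha⟩ := Finset.exists_ne_zero_of_sum_ne_zero hstep
      exact habs a t fun h0 => ha (by rw [h0, mul_zero])
    subst hts
    cases v with
    | nil => rfl
    | cons z w =>
      have hc2 : contP M7.toMDP.K fp.f (h ++ [t]) (z :: w) ≠ 0 :=
        fun h0 => hc (by rw [h0, mul_zero])
      have := ih (h ++ [t]) (List.getLast?_concat) hc2 (by simp)
      simpa using this

lemma habs_w : ∀ s ∈ ({wI, wa, wb, wc, v1, v2} : Finset St7),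
    ∀ a t, M7.toMDP.K s a t ≠ 0 → t = s := by
  intro s hs a t h
  fin_cases hs <;> cases a <;>
    first
      | (by_contra hne; simp [MDP.K, M7P, P7, d1, hne] at h)
      | simp [MDP.K, M7P, P7] at h

end Ex7

namespace Ex7
open St7 Act7

variable (fp : M7.toMDP.Policy)

lemma stepP_ne {h : List St7} {s t' : St7} (hl : h.getLast? = some s)
    (hstep : stepP M7.toMDP.K fp.f h t' ≠ 0) :
    ∃ a, M7.toMDP.K s a t' ≠ 0 ∧ fp.f h a ≠ 0 := by
  unfold stepP at hstep
  rw [hl] at hstep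
  simp only [Option.elim] at hstep
  obtain ⟨a, -, ha⟩ := Finset.exists_ne_zero_of_sum_ne_zero hstep
  exact ⟨a, fun h0 => ha (by rw [h0, mul_zero]), fun h0 => ha (by rw [h0, zero_mul])⟩

lemma K_qI_target {a : Act7} {y : St7} (h : M7.toMDP.K qI a y ≠ 0) : y = qM ∨ y = wI := by
  cases a <;> cases y <;> first | decide | (exfalso; apply h; simp [MDP.K, M7P, P7, d2])

lemma K_qM_target {a : Act7} {y : St7} (h : M7.toMDP.K qM a y ≠ 0) :
    y = ua ∨ y = ub ∨ y = uc ∨ y = v2 ∨ y = wa ∨ y = wb ∨ y = wc ∨ y = v1 := by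
  cases a <;> cases y <;> first | decide | (exfalso; apply h; simp [MDP.K, M7P, P7, d2])

lemma f_qI_b : fp.f [qI] .b = 0 := fp.support [qI] qI .b rfl rfl
lemma f_qI_c : fp.f [qI] .c = 0 := fp.support [qI] qI .c rfl rfl
lemma f_qI_d : fp.f [qI] .d = 0 := fp.support [qI] qI .d rfl rfl

lemma f_qI_a : fp.f [qI] .a = 1 := by
  have h := fp.sum_one [qI]
  rw [sumA] at h
  rw [f_qI_b, f_qI_c, f_qI_d] at h
  linarith

lemma step_qI_qM : stepP M7.toMDP.K fp.f [qI] qM = 0.6 := by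
  unfold stepP
  simp only [List.getLast?, Option.elim]
  rw [sumA, f_qI_a, f_qI_b, f_qI_c, f_qI_d]
  simp [MDP.K, M7P, P7, d2]

def E4 : Finset St7 := {ua, ub, uc, v2}

lemma last_of_absorb (z : St7) (hz : z ∈ ({wI, wa, wb, wc, v1, v2} : Finset St7))
    (h : List St7) (w' : List St7)
    (hc : contP M7.toMDP.K fp.f (h ++ [z]) w' ≠ 0) :
    (z :: w').getLast? = some z := by
  rcases w' with - | ⟨x, w''⟩
  · rfl
  · have := absorbP fp z (habs_w z hz) (x :: w'') (h ++ [z]) (List.getLast?_concat) hc (by simp)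
    simpa using this

lemma contP_shape (u : List St7) (hne : u ≠ [])
    (hev : ∃ s, u.getLast? = some s ∧ Even (C7 s))
    (hc : contP M7.toMDP.K fp.f [qI] u ≠ 0) :
    u.headI = qM ∧ u.tail.headI ∈ E4 := by
  obtain ⟨s, hls, hevs⟩ := hev
  rcases u with - | ⟨y, w⟩
  · exact absurd rfl hne
  simp only [contP] at hc
  have h1 := (mul_ne_zero_iff.1 hc).1
  have h2 := (mul_ne_zero_iff.1 hc).2
  obtain ⟨a, hK, -⟩ := stepP_ne fp (show ([qI] : List St7).getLast? = some qI from rfl) h1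
  rcases K_qI_target hK with rfl | rfl
  · -- y = qM
    rcases w with - | ⟨z, w'⟩
    · simp at hls; rw [← hls] at hevs; simp [C7, Nat.even_iff] at hevs
    · simp only [contP] at h2
      have h3 := (mul_ne_zero_iff.1 h2).1
      have h4 := (mul_ne_zero_iff.1 h2).2
      obtain ⟨a', hK', -⟩ := stepP_ne fp (show ([qI] ++ [qM]).getLast? = some qM from rfl) h3
      have hzE : z ∈ E4 := by
        rcases K_qM_target hK' with rfl | rfl | rfl | rfl | rfl | rfl | rfl | rfl
        · decide
        · decide
        · decide
        · decide
        all_goals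
          exfalso
          have hlz := last_of_absorb fp _ (by decide) ([qI] ++ [qM]) w' h4
          rw [List.getLast?_cons_cons, hlz] at hls
          cases hls
          simp [C7, Nat.even_iff] at hevs
      exact ⟨rfl, hzE⟩
  · -- y = wI, absorbed: last is wI, odd color
    exfalso
    have hlast : (wI :: w : List St7).getLast? = some wI := by
      rcases w with - | ⟨z', w''⟩
      · rfl
      · have := absorbP fp wI (habs_w wI (by decide)) (z' :: w'') ([qI] ++ [wI])
          (List.getLast?_concat) h2 (by simp)
        simpa using this
    rw [hlast] at hls
    cases hls
    simp [C7, Nat.even_iff] at hevs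

end Ex7

namespace Ex7
open St7 Act7
open scoped Classical

variable (fp : M7.toMDP.Policy)

lemma step1_bound (TgtL : Set (List St7))
    (hTgtEven : ∀ u, IsFirstHit TgtL [qI] u → ∃ s, u.getLast? = some s ∧ Even (C7 s))
    (h54 : (0.54 : ℝ) ≤ reachP M7.toMDP.K fp.f [qI] TgtL) :
    (0.54 : ℝ) ≤ 0.6 * ∑ x ∈ E4, stepP M7.toMDP.K fp.f [qI, qM] x := by
  refine le_trans h54 ?_
  unfold reachP
  refine Summable.tsum_le_of_sum_le
    (reach_summable fp TgtL [qI] qI (show ([qI] : List St7).getLast? = some qI from rfl)) ?_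
  intro Fs
  rw [← Finset.sum_image (g := fun u : {u : List St7 // IsFirstHit TgtL [qI] u} => u.1)
    (fun x _ y _ hxy => Subtype.ext hxy)]
  set F := Fs.image (fun u : {u : List St7 // IsFirstHit TgtL [qI] u} => u.1) with hFdef
  have hF : ∀ u ∈ F, IsFirstHit TgtL [qI] u := by
    intro u hu
    obtain ⟨⟨u', hu'⟩, -, rfl⟩ := Finset.mem_image.1 hu
    exact hu'
  have hshape : ∀ u ∈ F, contP M7.toMDP.K fp.f [qI] u ≠ 0 →
      (u.headI = qM ∧ u.tail.headI ∈ E4) := by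
    intro u hu hc
    exact contP_shape fp u (hF u hu).1 (hTgtEven u (hF u hu)) hc
  rw [← Finset.sum_filter_of_ne hshape]
  set F' := F.filter (fun u => u.headI = qM ∧ u.tail.headI ∈ E4) with hF'def
  have hmaps : ∀ u ∈ F', u.tail.headI ∈ E4 := fun u hu => (Finset.mem_filter.1 hu).2.2
  rw [← Finset.sum_fiberwise_of_maps_to hmaps (contP M7.toMDP.K fp.f [qI])]
  rw [Finset.mul_sum]
  refine Finset.sum_le_sum ?_
  intro x hx
  have hxqI : x ≠ qI := by intro h0; rw [h0] at hx; revert hx; decide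
  set G := F'.filter (fun u => u.tail.headI = x) with hGdef
  have hGF : ∀ u ∈ G, u ∈ F := fun u hu =>
    (Finset.mem_filter.1 (Finset.mem_filter.1 hu).1).1
  have hcons : ∀ u ∈ G, u = qM :: x :: u.tail.tail := by
    intro u hu
    have hu1 := Finset.mem_filter.1 hu
    have hu2 := Finset.mem_filter.1 hu1.1
    have hne : u ≠ [] := (hF u hu2.1).1
    have hh : u.headI = qM := hu2.2.1
    have ht : u.tail.headI = x := hu1.2
    rcases u with - | ⟨y, w⟩
    · exact absurd rfl hne
    rcases w with - | ⟨z, w'⟩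
    · simp at ht; exact absurd ht.symm hxqI
    simp at hh ht
    rw [hh, ht]
    simp
  have hinj : ∀ u ∈ G, ∀ v ∈ G, u.tail.tail = v.tail.tail → u = v := by
    intro u hu v hv he
    rw [hcons u hu, hcons v hv, he]
  have himg : ∑ w ∈ G.image (fun u => u.tail.tail),
      contP M7.toMDP.K fp.f [qI] (qM :: x :: w) = ∑ u ∈ G, contP M7.toMDP.K fp.f [qI] u := by
    rw [Finset.sum_image hinj]
    exact Finset.sum_congr rfl fun u hu => by rw [← hcons u hu]
  rw [← himg]
  have hfac : ∀ w : List St7, contP M7.toMDP.K fp.f [qI] (qM :: x :: w)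
      = 0.6 * (stepP M7.toMDP.K fp.f [qI, qM] x
          * contP M7.toMDP.K fp.f ([qI, qM] ++ [x]) w) := by
    intro w
    simp only [contP, List.singleton_append, List.cons_append, List.nil_append]
    rw [step_qI_qM]
  simp only [hfac]
  rw [← Finset.mul_sum, ← Finset.mul_sum]
  have htail : ∑ w ∈ G.image (fun u => u.tail.tail),
      contP M7.toMDP.K fp.f ([qI, qM] ++ [x]) w ≤ 1 := by
    refine contP_sum_le fp ((G.image (fun u => u.tail.tail)).sup List.length) _
      (fun w hw => Finset.le_sup hw) ?_ ([qI, qM] ++ [x]) x (List.getLast?_concat)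
    intro w hw w' hw' hpre
    obtain ⟨u, hu, rfl⟩ := Finset.mem_image.1 hw
    obtain ⟨u', hu', rfl⟩ := Finset.mem_image.1 hw'
    have hp2 : u <+: u' := by
      rw [hcons u hu, hcons u' hu']
      exact List.cons_prefix_cons.2 ⟨rfl, List.cons_prefix_cons.2 ⟨rfl, hpre⟩⟩
    have := firstHit_pf (hF u (hGF u hu)) (hF u' (hGF u' hu')) hp2
    rw [this]
  have hs2nn : 0 ≤ stepP M7.toMDP.K fp.f [qI, qM] x := stepP_nn fp _ _
  calc 0.6 * (stepP M7.toMDP.K fp.f [qI, qM] x * ∑ w ∈ G.image (fun u => u.tail.tail),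
        contP M7.toMDP.K fp.f ([qI, qM] ++ [x]) w)
      ≤ 0.6 * (stepP M7.toMDP.K fp.f [qI, qM] x * 1) := by
        refine mul_le_mul_of_nonneg_left ?_ (by norm_num)
        exact mul_le_mul_of_nonneg_left htail hs2nn
    _ = 0.6 * stepP M7.toMDP.K fp.f [qI, qM] x := by ring

lemma E4_sum_eval : ∑ x ∈ E4, stepP M7.toMDP.K fp.f [qI, qM] x
    = 0.9 * fp.f [qI, qM] .a + 0.8 * fp.f [qI, qM] .b
      + 0.7 * fp.f [qI, qM] .c + 0.6 * fp.f [qI, qM] .d := by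
  have hL : ([qI, qM] : List St7).getLast? = some qM := rfl
  unfold E4
  rw [Finset.sum_insert (by decide), Finset.sum_insert (by decide),
    Finset.sum_insert (by decide), Finset.sum_singleton]
  unfold stepP
  rw [hL]
  simp only [Option.elim]
  rw [sumA, sumA, sumA, sumA]
  simp [MDP.K, M7P, P7, d2]
  ring

end Ex7

namespace Ex7
open St7 Act7

def πs : ℕ → St7 := fun n => if n = 0 then qI else if n % 2 = 1 then qM else ua

lemma πs_zero : πs 0 = qI := rfl

lemma πs_odd {n : ℕ} (h : n % 2 = 1) : πs n = qM := by
  have h0 : n ≠ 0 := by omega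
  simp [πs, h0, h]

lemma πs_even {n : ℕ} (h : n % 2 = 0) (h0 : n ≠ 0) : πs n = ua := by
  simp [πs, h0]
  omega

lemma πs_trace : M7.toMDP.IsInfTrace πs := by
  intro i
  rcases Nat.even_or_odd i with he | ho
  · rcases Nat.eq_zero_or_pos i with rfl | hpos
    · refine ⟨.a, d2 qM wI 0.6 0.4, rfl, ?_⟩
      rw [show πs 1 = qM from rfl]
      simp [d2]
      norm_num
    · have h2 : i % 2 = 0 := Nat.even_iff.1 he
      rw [πs_even h2 (by omega), πs_odd (by omega)]
      refine ⟨.a, d2 qM wa 0.7 0.3, rfl, ?_⟩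
      simp [d2]
      norm_num
  · have h2 : i % 2 = 1 := Nat.odd_iff.1 ho
    rw [πs_odd h2, πs_even (by omega) (by omega)]
    refine ⟨.a, d2 ua wa 0.9 0.1, rfl, ?_⟩
    simp [d2]
    norm_num

variable (fp : M7.toMDP.Policy)

lemma K_ua_target {a : Act7} {y : St7} (h : M7.toMDP.K ua a y ≠ 0) : y = qM ∨ y = wa := by
  cases a <;> cases y <;> first | decide | (exfalso; apply h; simp [MDP.K, M7P, P7, d2])

lemma K_qMa_target {y : St7} (h : M7.toMDP.K qM .a y ≠ 0) : y = ua ∨ y = wa := by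
  cases y <;> first | decide | (exfalso; apply h; simp [MDP.K, M7P, P7, d2])

lemma fa_only (h : List St7) (s : St7) (hs : s = qI ∨ s = ua) (hl : h.getLast? = some s)
    (a : Act7) (ha : a ≠ .a) : fp.f h a = 0 := by
  refine fp.support h s a hl ?_
  rcases hs with rfl | rfl <;> cases a <;> first | exact absurd rfl ha | rfl

lemma pathB (hb : fp.f [qI, qM] .b = 0) (hc : fp.f [qI, qM] .c = 0)
    (hd : fp.f [qI, qM] .d = 0) (hpos : fp.IsPositional) :
    ∀ (u : List St7) (n : ℕ), contP M7.toMDP.K fp.f (prefixList πs n) u ≠ 0 → u ≠ [] →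
    (∃ s, u.getLast? = some s ∧ Even (C7 s)) →
    prefixList πs n ++ u = prefixList πs (n + u.length) ∧ (n + u.length) % 2 = 0 := by
  intro u
  induction u with
  | nil => intro n _ hne _; exact absurd rfl hne
  | cons y v ih =>
    intro n hcont hne hev
    obtain ⟨s, hls, hevs⟩ := hev
    simp only [contP] at hcont
    have h1 := (mul_ne_zero_iff.1 hcont).1
    have h2 := (mul_ne_zero_iff.1 hcont).2
    obtain ⟨a, hK, hfa⟩ := stepP_ne fp (prefixList_last πs n) h1
    -- identify y = πs (n + 1)
    have hy : y = πs (n + 1) ∨ (y ∈ ({wI, wa, wb, wc, v1, v2} : Finset St7) ∧ Odd (C7 y)) := by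
      rcases Nat.even_or_odd n with hpar | hpar
      · have hn2 : n % 2 = 0 := Nat.even_iff.1 hpar
        have hsval : πs n = qI ∨ πs n = ua := by
          rcases Nat.eq_zero_or_pos n with rfl | hp
          · exact Or.inl rfl
          · exact Or.inr (πs_even hn2 (by omega))
        have haa : a = .a := by
          by_contra hana
          exact hfa (fa_only fp _ _ hsval (prefixList_last πs n) a hana)
        subst haa
        rcases hsval with hv | hv <;> rw [hv] at hK
        · rcases K_qI_target hK with rfl | rfl
          · exact Or.inl (by rw [πs_odd (by omega)])
          · exact Or.inr ⟨by decide, by decide⟩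
        · rcases K_ua_target hK with rfl | rfl
          · exact Or.inl (by rw [πs_odd (by omega)])
          · exact Or.inr ⟨by decide, by decide⟩
      · have hn2 : n % 2 = 1 := Nat.odd_iff.1 hpar
        have hfeq : fp.f (prefixList πs n) = fp.f [qI, qM] := by
          refine hpos (prefixList πs n) [qI, qM] ?_
          rw [prefixList_last, πs_odd hn2]
          rfl
        have haa : a = .a := by
          rcases a with - | - | - | -
          · rfl
          · rw [hfeq] at hfa; exact absurd hb hfa
          · rw [hfeq] at hfa; exact absurd hc hfa
          · rw [hfeq] at hfa; exact absurd hd hfa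
        subst haa
        rw [πs_odd hn2] at hK
        rcases K_qMa_target hK with rfl | rfl
        · exact Or.inl (by rw [πs_even (by omega) (by omega)])
        · exact Or.inr ⟨by decide, by decide⟩
    rcases hy with rfl | ⟨hymem, hyodd⟩
    · -- continues along πs
      have hplsucc : prefixList πs n ++ [πs (n + 1)] = prefixList πs (n + 1) :=
        (prefixList_succ πs n).symm
      rcases v with - | ⟨z, w⟩
      · -- u = [y]
        simp at hls
        rw [← hls] at hevs
        have hnodd : n % 2 = 1 := by
          rcases Nat.even_or_odd n with hpar | hpar
          · exfalso
            have hn2 : n % 2 = 0 := Nat.even_iff.1 hpar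
            rw [πs_odd (by omega)] at hevs
            simp [C7, Nat.even_iff] at hevs
          · exact Nat.odd_iff.1 hpar
        constructor
        · simpa using hplsucc
        · simp; omega
      · -- u = y :: z :: w
        rw [hplsucc] at h2
        have hlast' : (z :: w).getLast? = some s := by
          rw [← hls]; rfl
        obtain ⟨heq, hpar⟩ := ih (n + 1) h2 (by simp) ⟨s, hlast', hevs⟩
        constructor
        · rw [show prefixList πs n ++ (πs (n + 1) :: z :: w)
              = (prefixList πs n ++ [πs (n + 1)]) ++ (z :: w) by simp]
          rw [hplsucc, heq]
          congr 1
          simp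
          omega
        · simp only [List.length_cons]
          have : n + (z :: w).length.succ % 2 = 0 → True := fun _ => trivial
          have hlen : (n + 1 + (z :: w).length) % 2 = 0 := hpar
          simp at hlen ⊢
          omega
    · -- absorbed in odd state: contradiction
      exfalso
      have hlast : (y :: v).getLast? = some y := by
        rcases v with - | ⟨z, w⟩
        · rfl
        · have := absorbP fp y (habs_w y hymem) (z :: w) (prefixList πs n ++ [y])
            (List.getLast?_concat) h2 (by simp)
          simpa using this
      rw [hlast] at hls
      cases hls
      exact (Nat.not_even_iff_odd.2 hyodd) hevs

end Ex7

namespace Ex7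
open St7 Act7

lemma exists_dec (L : ℕ → ℕ) (a b : ℕ) (hab : a < b) (hv : L b < L a) :
    ∃ j, a ≤ j ∧ j < b ∧ L (j + 1) < L j := by
  by_contra hcon
  push_neg at hcon
  have hmono : ∀ d, a + d ≤ b → L a ≤ L (a + d) := by
    intro d
    induction d with
    | zero => intro _; simp
    | succ e ihe =>
      intro hde
      have h1 : L a ≤ L (a + e) := ihe (by omega)
      have h2 : L (a + e) ≤ L (a + e + 1) := hcon (a + e) (by omega) (by omega)
      rw [show a + (e + 1) = a + e + 1 by omega]
      omega
  have := hmono (b - a) (by omega)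
  rw [show a + (b - a) = b by omega] at this
  omega

lemma neg7 : ¬ ∃ (fp : M7.toMDP.Policy) (l : List St7 → ℕ) (l' : List St7 → Bool),
    RiskAverseFrom M7 fp l l' 0.54 St7.qI ∧ fp.IsPositional := by
  rintro ⟨fp, l, l', hra, hpos⟩
  set TgtL : Set (List St7) := {h | l' h = true} with hTgtLdef
  have hmemT : ∀ h : List St7, h ∈ TgtL → l' h = true := fun h hh => hh
  have hTgtEven : ∀ (t u : List St7), IsFirstHit TgtL t u →
      ∃ s, u.getLast? = some s ∧ Even (C7 s) := by
    intro t u hu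
    cases hlu : u.getLast? with
    | none => exact absurd (List.getLast?_eq_none_iff.1 hlu) hu.1
    | some s =>
      have hl2 : (t ++ u).getLast? = some s := by
        rw [List.getLast?_append_of_ne_nil t hu.1]
        exact hlu
      exact ⟨s, rfl, (hra.goal_label (t ++ u) s hl2 (hmemT _ hu.2.1)).2⟩
  have h54 := hra.reach_goal [qI] rfl (Or.inl rfl)
  have hstep1 := step1_bound fp TgtL (fun u hu => hTgtEven [qI] u hu) h54
  rw [E4_sum_eval] at hstep1
  have hsum := fp.sum_one [qI, qM]
  rw [sumA] at hsum
  have hna := fp.nonneg [qI, qM] .a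
  have hnb := fp.nonneg [qI, qM] .b
  have hnc := fp.nonneg [qI, qM] .c
  have hnd := fp.nonneg [qI, qM] .d
  have hb0 : fp.f [qI, qM] .b = 0 := by linarith
  have hc0 : fp.f [qI, qM] .c = 0 := by linarith
  have hd0 : fp.f [qI, qM] .d = 0 := by linarith
  -- bounded decreases
  obtain ⟨k, hk⟩ := hra.bounded
  have hdec := hk πs πs_zero πs_trace
  -- successive goals along πs
  have hnext : ∀ m : ℕ, (m = 0 ∨ l' (prefixList πs (2 * m)) = true) →
      ∃ m', m < m' ∧ l' (prefixList πs (2 * m')) = true := by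
    intro m hm
    have hhead : (prefixList πs (2 * m)).head? = some St7.qI := by
      rw [prefixList_head, πs_zero]
    have hcase : prefixList πs (2 * m) = [St7.qI] ∨ l' (prefixList πs (2 * m)) = true := by
      rcases hm with rfl | hmm
      · left; rfl
      · right; exact hmm
    have h54' := hra.reach_goal (prefixList πs (2 * m)) hhead hcase
    obtain ⟨u, hu, hupos⟩ := reach_pos_elt fp TgtL (prefixList πs (2 * m)) h54'
    obtain ⟨heq, hpar⟩ := pathB fp hb0 hc0 hd0 hpos u (2 * m) (ne_of_gt hupos) hu.1
      (hTgtEven _ u hu)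
    have hupos' : u.length ≠ 0 := fun h0 => hu.1 (List.length_eq_zero_iff.1 h0)
    refine ⟨(2 * m + u.length) / 2, by omega, ?_⟩
    rw [show 2 * ((2 * m + u.length) / 2) = 2 * m + u.length by omega, ← heq]
    exact hmemT _ hu.2.1
  -- iterate choices
  have hchoice : ∀ x : {m : ℕ // m = 0 ∨ l' (prefixList πs (2 * m)) = true},
      ∃ m', x.1 < m' ∧ l' (prefixList πs (2 * m')) = true := fun x => hnext x.1 x.2
  let nxt : {m : ℕ // m = 0 ∨ l' (prefixList πs (2 * m)) = true} →
      {m : ℕ // m = 0 ∨ l' (prefixList πs (2 * m)) = true} :=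
    fun x => ⟨(hchoice x).choose, Or.inr (hchoice x).choose_spec.2⟩
  let Ms : ℕ → ℕ := fun i => (nxt^[i] ⟨0, Or.inl rfl⟩).1
  have hMsucc : ∀ i, Ms i < Ms (i + 1) ∧ l' (prefixList πs (2 * Ms (i + 1))) = true := by
    intro i
    have hit : nxt^[i + 1] ⟨0, Or.inl rfl⟩ = nxt (nxt^[i] ⟨0, Or.inl rfl⟩) :=
      Function.iterate_succ_apply' nxt i _
    constructor
    · show Ms i < (nxt^[i + 1] ⟨0, Or.inl rfl⟩).1
      rw [hit]
      exact (hchoice _).choose_spec.1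
    · show l' (prefixList πs (2 * (nxt^[i + 1] ⟨0, Or.inl rfl⟩).1)) = true
      rw [hit]
      exact (hchoice _).choose_spec.2
  have hMmono : StrictMono Ms := strictMono_nat_of_lt_succ fun i => (hMsucc i).1
  have hMpos : ∀ i, 1 ≤ Ms (i + 1) := by
    intro i
    have h0 : Ms 0 = 0 := rfl
    have h1 : Ms 0 < Ms (i + 1) := hMmono (Nat.succ_pos i)
    omega
  -- label values
  have hL0 : ∀ i, l (prefixList πs (2 * Ms (i + 1))) = 0 := by
    intro i
    have hg := (hMsucc i).2
    have hval : πs (2 * Ms (i + 1)) = ua := by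
      refine πs_even (by omega) (by have := hMpos i; omega)
    have hlast : (prefixList πs (2 * Ms (i + 1))).getLast? = some ua := by
      rw [prefixList_last, hval]
    have := (hra.goal_label _ ua hlast hg).1
    rw [show M7.C ua = 0 from rfl] at this
    omega
  have hL1 : ∀ n, n % 2 = 1 → 4 ≤ l (prefixList πs n) := by
    intro n hn
    have hlast : (prefixList πs n).getLast? = some qM := by
      rw [prefixList_last, πs_odd hn]
    have := hra.odd_label _ qM hlast (by rw [show M7.C qM = 3 from rfl]; decide)
    rw [show M7.C qM = 3 from rfl] at this
    omega
  -- find decreases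
  have hJ : ∀ i : ℕ, ∃ j, 2 * Ms i + 1 ≤ j ∧ j < 2 * Ms (i + 1) ∧
      l (prefixList πs (j + 1)) < l (prefixList πs j) := by
    intro i
    refine exists_dec (fun n => l (prefixList πs n)) (2 * Ms i + 1) (2 * Ms (i + 1))
      (by have := (hMsucc i).1; omega) ?_
    have ha := hL0 i
    have hb := hL1 (2 * Ms i + 1) (by omega)
    show l (prefixList πs (2 * Ms (i + 1))) < l (prefixList πs (2 * Ms i + 1))
    omega
  choose J hJ1 hJ2 hJ3 using hJ
  have hJmono : StrictMono J := by
    refine strictMono_nat_of_lt_succ fun i => ?_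
    have := hJ2 i
    have := hJ1 (i + 1)
    omega
  -- contradiction
  have hcard := hdec (2 * Ms (k + 1))
  have hsubset : (Finset.range (k + 1)).image J ⊆
      (Finset.range (2 * Ms (k + 1))).filter
        (fun i => l (prefixList πs (i + 1)) < l (prefixList πs i)) := by
    intro j hj
    obtain ⟨i, hi, rfl⟩ := Finset.mem_image.1 hj
    rw [Finset.mem_range] at hi
    rw [Finset.mem_filter, Finset.mem_range]
    refine ⟨?_, hJ3 i⟩
    have h1 := hJ2 i
    have h2 : Ms (i + 1) ≤ Ms (k + 1) := hMmono.monotone (by omega)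
    omega
  have hge : k + 1 ≤ ((Finset.range (2 * Ms (k + 1))).filter
      (fun i => l (prefixList πs (i + 1)) < l (prefixList πs i))).card := by
    calc k + 1 = ((Finset.range (k + 1)).image J).card := by
          rw [Finset.card_image_of_injective _ hJmono.injective, Finset.card_range]
      _ ≤ _ := Finset.card_le_card hsubset
  omega

end Ex7

/-- The parity MDP of Figure 3 is well-formed, admits a finite-state
`0.54`-risk-averse policy, but admits no positional `0.54`-risk-averse policy. -/
theorem example_needs_memory :
    M7.toMDP.WellFormed ∧
    (∃ (fp : M7.toMDP.Policy) (l : List St7 → ℕ) (l' : List St7 → Bool),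
      RiskAverseFrom M7 fp l l' 0.54 St7.qI ∧ fp.IsFiniteState) ∧
    ¬ ∃ (fp : M7.toMDP.Policy) (l : List St7 → ℕ) (l' : List St7 → Bool),
      RiskAverseFrom M7 fp l l' 0.54 St7.qI ∧ fp.IsPositional := by
  exact ⟨Ex7.wf7, Ex7.pos7, Ex7.neg7⟩
end

section
/- Consider the parity MDP with states {s0, q1, q2, q3, q4}, colors C(s0)=0, C(q1)=C(q2)=C(q3)=1, C(q4)=2, initial state s0, a single action a everywhere, and transitions: from s0 to q1 with probability 0.2 and to q2 with probability 0.8; from q1 to q3 with probability 0.8 and to q4 with probability 0.2; from q2 to q3 with probability 0.2 and to q4 with probability 0.8; q3 and q4 absorbing (self-loop with probability 1). Then: (i) this MDP admits a 0.68-risk-averse policy from s0 (the probability of reaching q4 from s0 is 0.2·0.2 + 0.8·0.8 = 0.68); (ii) under any policy, the state q1 is reached from s0 with positive probability; (iii) the probability of reaching q4 from q1 is only 0.2, so for p = 0.68 the state q1 admits no p-risk-averse policy as initial state (q1 is not winning for p = 0.68). -/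
open scoped BigOperators

/-- States of the example parity MDP of Figure 2. -/
inductive St8 : Type
  | s0 | q1 | q2 | q3 | q4
  deriving DecidableEq

instance : Fintype St8 where
  elems := {St8.s0, St8.q1, St8.q2, St8.q3, St8.q4}
  complete := by intro x; cases x <;> simp

/-- Transition function of the example parity MDP of Figure 2
(a single action `()` everywhere). -/
noncomputable def P8 : St8 → Unit → Option (St8 → ℝ)
  | .s0, _ => some (d2 .q1 .q2 0.2 0.8)
  | .q1, _ => some (d2 .q3 .q4 0.8 0.2)
  | .q2, _ => some (d2 .q3 .q4 0.2 0.8)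
  | .q3, _ => some (d1 .q3)
  | .q4, _ => some (d1 .q4)

/-- Coloring of the example parity MDP of Figure 2. -/
def C8 : St8 → ℕ
  | .s0 => 0 | .q1 => 1 | .q2 => 1 | .q3 => 1 | .q4 => 2

/-- The example parity MDP of Figure 2. -/
noncomputable def M8 : ParityMDP St8 Unit := { P := P8, init := .s0, C := C8 }

namespace Ex8proof

open List

/-- Concrete transition table of the example MDP. -/
noncomputable def tbl : St8 → St8 → ℝ
  | .s0, .q1 => 0.2
  | .s0, .q2 => 0.8
  | .q1, .q3 => 0.8
  | .q1, .q4 => 0.2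
  | .q2, .q3 => 0.2
  | .q2, .q4 => 0.8
  | .q3, .q3 => 1
  | .q4, .q4 => 1
  | _, _ => 0

lemma K_eq (a b : St8) : M8.toMDP.K a () b = tbl a b := by
  cases a <;> cases b <;> simp [MDP.K, M8, P8, d1, d2, tbl]

lemma tbl_nonneg (a b : St8) : 0 ≤ tbl a b := by
  cases a <;> cases b <;> norm_num [tbl]

/-- The possible-step relation. -/
def Rb : St8 → St8 → Prop
  | .s0, .q1 => True
  | .s0, .q2 => True
  | .q1, .q3 => True
  | .q1, .q4 => True
  | .q2, .q3 => True
  | .q2, .q4 => True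
  | .q3, .q3 => True
  | .q4, .q4 => True
  | _, _ => False

lemma tbl_ne_iff (a b : St8) : tbl a b ≠ 0 ↔ Rb a b := by
  cases a <;> cases b <;> norm_num [tbl, Rb]

lemma funit (fp : M8.toMDP.Policy) (h : List St8) : fp.f h () = 1 := by
  have := fp.sum_one h
  simpa using this

lemma stepP_eq (fp : M8.toMDP.Policy) {h : List St8} {t : St8}
    (hl : h.getLast? = some t) (t' : St8) :
    stepP M8.toMDP.K fp.f h t' = tbl t t' := by
  simp [stepP, hl, funit, K_eq]



lemma stepP_nonneg (fp : M8.toMDP.Policy) (h : List St8) (t' : St8) :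
    0 ≤ stepP M8.toMDP.K fp.f h t' := by
  cases hl : h.getLast? with
  | none => simp [stepP, hl]
  | some t => rw [stepP_eq fp hl]; exact tbl_nonneg t t'

lemma contP_cons (fp : M8.toMDP.Policy) (h : List St8) (t' : St8) (u : List St8) :
    contP M8.toMDP.K fp.f h (t' :: u) =
      stepP M8.toMDP.K fp.f h t' * contP M8.toMDP.K fp.f (h ++ [t']) u := rfl

lemma contP_nil (fp : M8.toMDP.Policy) (h : List St8) :
    contP M8.toMDP.K fp.f h [] = 1 := rfl

lemma contP_nonneg (fp : M8.toMDP.Policy) :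
    ∀ (u h : List St8), 0 ≤ contP M8.toMDP.K fp.f h u
  | [], h => by rw [contP_nil]; norm_num
  | t' :: u, h => by
    rw [contP_cons]
    exact mul_nonneg (stepP_nonneg fp h t') (contP_nonneg fp u (h ++ [t']))

lemma last_concat (h : List St8) (t' : St8) : (h ++ [t']).getLast? = some t' := by
  rw [List.getLast?_append_of_ne_nil _ (by simp)]; rfl

lemma chain_of_contP (fp : M8.toMDP.Policy) :
    ∀ (u h : List St8) (t : St8), h.getLast? = some t →
      contP M8.toMDP.K fp.f h u ≠ 0 → List.Chain' Rb (t :: u)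
  | [], h, t, _, _ => by exact List.isChain_singleton t
  | t' :: u, h, t, hl, hne => by
    rw [contP_cons] at hne
    have h1 : stepP M8.toMDP.K fp.f h t' ≠ 0 := fun h0 => hne (by rw [h0, zero_mul])
    have h2 : contP M8.toMDP.K fp.f (h ++ [t']) u ≠ 0 := fun h0 => hne (by rw [h0, mul_zero])
    refine List.isChain_cons_cons.mpr ⟨?_, chain_of_contP fp u _ t' (last_concat h t') h2⟩
    rw [stepP_eq fp hl] at h1
    exact (tbl_ne_iff t t').mp h1

lemma rb_s0 {b : St8} (h : Rb .s0 b) : b = .q1 ∨ b = .q2 := by cases b <;> simp_all [Rb]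
lemma rb_q1 {b : St8} (h : Rb .q1 b) : b = .q3 ∨ b = .q4 := by cases b <;> simp_all [Rb]
lemma rb_q2 {b : St8} (h : Rb .q2 b) : b = .q3 ∨ b = .q4 := by cases b <;> simp_all [Rb]
lemma q3_closed : ∀ b, Rb .q3 b → b = .q3 := by intro b h; cases b <;> simp_all [Rb]
lemma q4_closed : ∀ b, Rb .q4 b → b = .q4 := by intro b h; cases b <;> simp_all [Rb]

lemma chain_all_eq {t : St8} (ht : ∀ b, Rb t b → b = t) :
    ∀ u, List.Chain' Rb (t :: u) → ∀ x ∈ u, x = t := by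
  intro u
  induction u with
  | nil => simp
  | cons b u ih =>
    intro hch x hx
    obtain ⟨h1, h2⟩ := List.isChain_cons_cons.mp hch
    have hb : b = t := ht b h1
    subst hb
    rcases List.mem_cons.mp hx with rfl | hx
    · rfl
    · exact ih h2 x hx

lemma step_ne {t b : St8} (ht : t ≠ .s0) (h : Rb t b) : b ≠ .s0 ∧ b ≠ .q1 := by
  cases t <;> cases b <;> simp_all [Rb]

lemma no_return : ∀ (u : List St8) (t : St8), t ≠ .s0 → List.Chain' Rb (t :: u) →
    ∀ x ∈ u, x ≠ .s0 ∧ x ≠ .q1 := by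
  intro u
  induction u with
  | nil => simp
  | cons b u ih =>
    intro t ht hch x hx
    obtain ⟨h1, h2⟩ := List.isChain_cons_cons.mp hch
    have hb := step_ne ht h1
    rcases List.mem_cons.mp hx with rfl | hx
    · exact hb
    · exact ih b hb.1 h2 x hx

lemma getLast?_all_eq {x : St8} : ∀ (w : List St8), (∀ y ∈ w, y = x) →
    (x :: w).getLast? = some x := by
  intro w
  induction w with
  | nil => intro _; rfl
  | cons y w ih =>
    intro hall
    have hy : y = x := hall y (List.mem_cons_self)
    subst hy
    rw [List.getLast?_cons_cons]
    exact ih fun z hz => hall z (List.mem_cons_of_mem _ hz)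

lemma last_pre_all_eq {x : St8} (pre w : List St8) (hall : ∀ y ∈ w, y = x) :
    (pre ++ x :: w).getLast? = some x := by
  rw [List.getLast?_append_cons]
  exact getLast?_all_eq w hall



lemma prefix_one {a : St8} {v : List St8} (h : v <+: [a]) : v = [] ∨ v = [a] := by
  obtain ⟨w, hw⟩ := h
  rcases v with _ | ⟨x, v⟩
  · exact Or.inl rfl
  · right
    simp only [List.cons_append, List.cons.injEq] at hw
    obtain ⟨rfl, hw⟩ := hw
    have hv : v = [] := (List.append_eq_nil_iff.mp hw).1
    simp [hv]

lemma prefix_two {a b : St8} {v : List St8} (h : v <+: [a, b]) :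
    v = [] ∨ v = [a] ∨ v = [a, b] := by
  obtain ⟨w, hw⟩ := h
  rcases v with _ | ⟨x, v⟩
  · exact Or.inl rfl
  simp only [List.cons_append, List.cons.injEq] at hw
  obtain ⟨rfl, hw⟩ := hw
  rcases v with _ | ⟨y, v⟩
  · exact Or.inr (Or.inl rfl)
  simp only [List.cons_append, List.cons.injEq] at hw
  obtain ⟨rfl, hw⟩ := hw
  have hv : v = [] := (List.append_eq_nil_iff.mp hw).1
  simp [hv]

/-- characterization: first hits of `q4`-histories from `[s0]` with nonzero prob. -/
lemma charA (fp : M8.toMDP.Policy) (u : List St8)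
    (hfh : IsFirstHit {h | h.getLast? = some St8.q4} [St8.s0] u)
    (hne : contP M8.toMDP.K fp.f [St8.s0] u ≠ 0) :
    u = [St8.q1, St8.q4] ∨ u = [St8.q2, St8.q4] := by
  obtain ⟨hu0, hu1, hu2⟩ := hfh
  have hch := chain_of_contP fp u [St8.s0] St8.s0 rfl hne
  rcases u with _ | ⟨t1, v⟩
  · exact absurd rfl hu0
  obtain ⟨hr1, hch1⟩ := List.isChain_cons_cons.mp hch
  have hlast : (St8.s0 :: t1 :: v).getLast? = some St8.q4 := hu1
  rcases v with _ | ⟨t2, w⟩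
  · exfalso
    have ht1 : t1 = St8.q4 := by simpa using hlast
    subst ht1
    rcases rb_s0 hr1 with h | h <;> exact St8.noConfusion h
  obtain ⟨hr2, hch2⟩ := List.isChain_cons_cons.mp hch1
  have ht2 : t2 = St8.q3 ∨ t2 = St8.q4 := by
    rcases rb_s0 hr1 with rfl | rfl
    · exact rb_q1 hr2
    · exact rb_q2 hr2
  rcases ht2 with rfl | rfl
  · exfalso
    have hall := chain_all_eq q3_closed w hch2
    have : (St8.s0 :: t1 :: St8.q3 :: w).getLast? = some St8.q3 :=
      last_pre_all_eq [St8.s0, t1] w hall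
    rw [this] at hlast
    simp at hlast
  · rcases w with _ | ⟨t3, w'⟩
    · rcases rb_s0 hr1 with rfl | rfl
      · exact Or.inl rfl
      · exact Or.inr rfl
    · exfalso
      exact hu2 [t1, St8.q4] ⟨t3 :: w', rfl⟩ (by simp) (by simp)
        (by simp [Set.mem_setOf_eq])



/-- first hits of `q1`-histories from `[s0]`. -/
lemma charB (fp : M8.toMDP.Policy) (u : List St8)
    (hfh : IsFirstHit {h | h.getLast? = some St8.q1} [St8.s0] u)
    (hne : contP M8.toMDP.K fp.f [St8.s0] u ≠ 0) :
    u = [St8.q1] := by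
  obtain ⟨hu0, hu1, hu2⟩ := hfh
  have hch := chain_of_contP fp u [St8.s0] St8.s0 rfl hne
  rcases u with _ | ⟨t1, v⟩
  · exact absurd rfl hu0
  obtain ⟨hr1, hch1⟩ := List.isChain_cons_cons.mp hch
  have hlast : (St8.s0 :: t1 :: v).getLast? = some St8.q1 := hu1
  rcases rb_s0 hr1 with rfl | rfl
  · rcases v with _ | ⟨t2, w⟩
    · rfl
    · exfalso
      exact hu2 [St8.q1] ⟨t2 :: w, rfl⟩ (by simp) (by simp) (by simp [Set.mem_setOf_eq])
  · exfalso
    rcases v with _ | ⟨t2, w⟩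
    · simp at hlast
    obtain ⟨hr2, hch2⟩ := List.isChain_cons_cons.mp hch1
    rcases rb_q2 hr2 with rfl | rfl
    · have : (St8.s0 :: St8.q2 :: St8.q3 :: w).getLast? = some St8.q3 :=
        last_pre_all_eq [St8.s0, St8.q2] w (chain_all_eq q3_closed w hch2)
      rw [this] at hlast; simp at hlast
    · have : (St8.s0 :: St8.q2 :: St8.q4 :: w).getLast? = some St8.q4 :=
        last_pre_all_eq [St8.s0, St8.q2] w (chain_all_eq q4_closed w hch2)
      rw [this] at hlast; simp at hlast

/-- first hits of `q4`-histories from `[q1]`. -/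
lemma charC (fp : M8.toMDP.Policy) (u : List St8)
    (hfh : IsFirstHit {h | h.getLast? = some St8.q4} [St8.q1] u)
    (hne : contP M8.toMDP.K fp.f [St8.q1] u ≠ 0) :
    u = [St8.q4] := by
  obtain ⟨hu0, hu1, hu2⟩ := hfh
  have hch := chain_of_contP fp u [St8.q1] St8.q1 rfl hne
  rcases u with _ | ⟨t1, v⟩
  · exact absurd rfl hu0
  obtain ⟨hr1, hch1⟩ := List.isChain_cons_cons.mp hch
  have hlast : (St8.q1 :: t1 :: v).getLast? = some St8.q4 := hu1
  rcases rb_q1 hr1 with rfl | rfl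
  · exfalso
    have : (St8.q1 :: St8.q3 :: v).getLast? = some St8.q3 :=
      last_pre_all_eq [St8.q1] v (chain_all_eq q3_closed v hch1)
    rw [this] at hlast; simp at hlast
  · rcases v with _ | ⟨t2, w⟩
    · rfl
    · exfalso
      exact hu2 [St8.q4] ⟨t2 :: w, rfl⟩ (by simp) (by simp) (by simp [Set.mem_setOf_eq])

/-- first hits of `q4`-histories from any history ending in `q4`. -/
lemma charE (fp : M8.toMDP.Policy) (t : List St8) (hlt : t.getLast? = some St8.q4)
    (u : List St8)
    (hfh : IsFirstHit {h | h.getLast? = some St8.q4} t u)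
    (hne : contP M8.toMDP.K fp.f t u ≠ 0) :
    u = [St8.q4] := by
  obtain ⟨hu0, hu1, hu2⟩ := hfh
  have hch := chain_of_contP fp u t St8.q4 hlt hne
  rcases u with _ | ⟨t1, v⟩
  · exact absurd rfl hu0
  obtain ⟨hr1, hch1⟩ := List.isChain_cons_cons.mp hch
  have ht1 : t1 = St8.q4 := q4_closed t1 hr1
  subst ht1
  rcases v with _ | ⟨t2, w⟩
  · rfl
  · exfalso
    refine hu2 [St8.q4] ⟨t2 :: w, rfl⟩ (by simp) (by simp) ?_
    show (t ++ [St8.q4]).getLast? = some St8.q4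
    exact last_concat t _

/-- contP of a two-step continuation. -/
lemma contP_pair (fp : M8.toMDP.Policy) {h0 : List St8} {t0 : St8}
    (hl : h0.getLast? = some t0) (a b : St8) :
    contP M8.toMDP.K fp.f h0 [a, b] = tbl t0 a * tbl a b := by
  rw [contP_cons, contP_cons, contP_nil, stepP_eq fp hl, stepP_eq fp (last_concat h0 a), mul_one]

lemma contP_single (fp : M8.toMDP.Policy) {h0 : List St8} {t0 : St8}
    (hl : h0.getLast? = some t0) (a : St8) :
    contP M8.toMDP.K fp.f h0 [a] = tbl t0 a := by
  rw [contP_cons, contP_nil, stepP_eq fp hl, mul_one]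

lemma contP_rep (fp : M8.toMDP.Policy) :
    ∀ (n : ℕ) (h : List St8), h.getLast? = some St8.q4 →
      contP M8.toMDP.K fp.f h (List.replicate n St8.q4) = 1
  | 0, h, _ => rfl
  | n + 1, h, hl => by
    rw [List.replicate_succ, contP_cons, stepP_eq fp hl,
      contP_rep fp n (h ++ [St8.q4]) (last_concat h _)]
    norm_num [tbl]



lemma FH1 : IsFirstHit {h | h.getLast? = some St8.q4} [St8.s0] [St8.q1, St8.q4] := by
  refine ⟨by simp, by simp [Set.mem_setOf_eq], ?_⟩
  intro v hv hne hnev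
  rcases prefix_two hv with rfl | rfl | rfl
  · exact absurd rfl hne
  · simp [Set.mem_setOf_eq]
  · exact absurd rfl hnev

lemma FH2 : IsFirstHit {h | h.getLast? = some St8.q4} [St8.s0] [St8.q2, St8.q4] := by
  refine ⟨by simp, by simp [Set.mem_setOf_eq], ?_⟩
  intro v hv hne hnev
  rcases prefix_two hv with rfl | rfl | rfl
  · exact absurd rfl hne
  · simp [Set.mem_setOf_eq]
  · exact absurd rfl hnev

lemma FH3 : IsFirstHit {h | h.getLast? = some St8.q1} [St8.s0] [St8.q1] := by
  refine ⟨by simp, by simp [Set.mem_setOf_eq], ?_⟩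
  intro v hv hne hnev
  rcases prefix_one hv with rfl | rfl
  · exact absurd rfl hne
  · exact absurd rfl hnev

lemma FH4 : IsFirstHit {h | h.getLast? = some St8.q4} [St8.q1] [St8.q4] := by
  refine ⟨by simp, by simp [Set.mem_setOf_eq], ?_⟩
  intro v hv hne hnev
  rcases prefix_one hv with rfl | rfl
  · exact absurd rfl hne
  · exact absurd rfl hnev

lemma FH5 (t : List St8) (hlt : t.getLast? = some St8.q4) :
    IsFirstHit {h | h.getLast? = some St8.q4} t [St8.q4] := by
  refine ⟨by simp, ?_, ?_⟩
  · show (t ++ [St8.q4]).getLast? = some St8.q4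
    exact last_concat t _
  · intro v hv hne hnev
    rcases prefix_one hv with rfl | rfl
    · exact absurd rfl hne
    · exact absurd rfl hnev

lemma reach_s0_q4 (fp : M8.toMDP.Policy) :
    reachP M8.toMDP.K fp.f [St8.s0] {h | h.getLast? = some St8.q4} = 0.68 := by
  classical
  have hf : ∀ b ∉ ({⟨[St8.q1, St8.q4], FH1⟩, ⟨[St8.q2, St8.q4], FH2⟩} :
        Finset {u // IsFirstHit {h | h.getLast? = some St8.q4} [St8.s0] u}),
      contP M8.toMDP.K fp.f [St8.s0] b.1 = 0 := by
    intro b hb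
    by_contra hbne
    rcases charA fp b.1 b.2 hbne with h | h
    · exact hb (by simp only [Finset.mem_insert, Finset.mem_singleton]; exact Or.inl (Subtype.ext h))
    · exact hb (by simp only [Finset.mem_insert, Finset.mem_singleton]; exact Or.inr (Subtype.ext h))
  rw [reachP, tsum_eq_sum hf, Finset.sum_pair (by simp),
    contP_pair fp (show [St8.s0].getLast? = some St8.s0 from rfl),
    contP_pair fp (show [St8.s0].getLast? = some St8.s0 from rfl)]
  norm_num [tbl]

lemma reach_s0_q1 (fp : M8.toMDP.Policy) :
    reachP M8.toMDP.K fp.f [St8.s0] {h | h.getLast? = some St8.q1} = 0.2 := by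
  classical
  have hf : ∀ b ∉ ({⟨[St8.q1], FH3⟩} :
      Finset {u // IsFirstHit {h | h.getLast? = some St8.q1} [St8.s0] u}),
      contP M8.toMDP.K fp.f [St8.s0] b.1 = 0 := by
    intro b hb
    by_contra hbne
    exact hb (by simp only [Finset.mem_singleton]; exact Subtype.ext (charB fp b.1 b.2 hbne))
  rw [reachP, tsum_eq_sum hf, Finset.sum_singleton,
    contP_single fp (show [St8.s0].getLast? = some St8.s0 from rfl)]
  norm_num [tbl]

lemma reach_q1_q4 (fp : M8.toMDP.Policy) :
    reachP M8.toMDP.K fp.f [St8.q1] {h | h.getLast? = some St8.q4} = 0.2 := by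
  classical
  have hf : ∀ b ∉ ({⟨[St8.q4], FH4⟩} :
      Finset {u // IsFirstHit {h | h.getLast? = some St8.q4} [St8.q1] u}),
      contP M8.toMDP.K fp.f [St8.q1] b.1 = 0 := by
    intro b hb
    by_contra hbne
    exact hb (by simp only [Finset.mem_singleton]; exact Subtype.ext (charC fp b.1 b.2 hbne))
  rw [reachP, tsum_eq_sum hf, Finset.sum_singleton,
    contP_single fp (show [St8.q1].getLast? = some St8.q1 from rfl)]
  norm_num [tbl]

lemma reach_from_q4 (fp : M8.toMDP.Policy) (t : List St8) (hlt : t.getLast? = some St8.q4) :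
    reachP M8.toMDP.K fp.f t {h | h.getLast? = some St8.q4} = 1 := by
  classical
  have hf : ∀ b ∉ ({⟨[St8.q4], FH5 t hlt⟩} :
      Finset {u // IsFirstHit {h | h.getLast? = some St8.q4} t u}),
      contP M8.toMDP.K fp.f t b.1 = 0 := by
    intro b hb
    by_contra hbne
    exact hb (by simp only [Finset.mem_singleton]; exact Subtype.ext (charE fp t hlt b.1 b.2 hbne))
  rw [reachP, tsum_eq_sum hf, Finset.sum_singleton, contP_single fp hlt]
  norm_num [tbl]



/-- first hits of a "goal" set from `[q1]` whose members end in `s0` or `q4`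
are powers of `q4`. -/
lemma charD (fp : M8.toMDP.Policy) (Tgt : Set (List St8))
    (hT : ∀ (h : List St8) (x : St8), h.getLast? = some x → h ∈ Tgt →
      x = St8.s0 ∨ x = St8.q4)
    (u : List St8) (hfh : IsFirstHit Tgt [St8.q1] u)
    (hne : contP M8.toMDP.K fp.f [St8.q1] u ≠ 0) :
    ∃ n, u = St8.q4 :: List.replicate n St8.q4 := by
  obtain ⟨hu0, hu1, hu2⟩ := hfh
  have hch := chain_of_contP fp u [St8.q1] St8.q1 rfl hne
  rcases u with _ | ⟨t1, v⟩
  · exact absurd rfl hu0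
  obtain ⟨hr1, hch1⟩ := List.isChain_cons_cons.mp hch
  rcases rb_q1 hr1 with rfl | rfl
  · exfalso
    have hlast : (St8.q1 :: St8.q3 :: v).getLast? = some St8.q3 :=
      last_pre_all_eq [St8.q1] v (chain_all_eq q3_closed v hch1)
    rcases hT _ _ hlast hu1 with h | h <;> exact St8.noConfusion h
  · have hall := chain_all_eq q4_closed v hch1
    refine ⟨v.length, ?_⟩
    have : v = List.replicate v.length St8.q4 := List.eq_replicate_of_mem hall
    rw [← this]

/-- Two first hits which are both `q4`-powers coincide. -/
lemma rep_unique (Tgt : Set (List St8)) {n m : ℕ}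
    (h1 : IsFirstHit Tgt [St8.q1] (St8.q4 :: List.replicate n St8.q4))
    (h2 : IsFirstHit Tgt [St8.q1] (St8.q4 :: List.replicate m St8.q4)) :
    (St8.q4 :: List.replicate n St8.q4) = (St8.q4 :: List.replicate m St8.q4) := by
  rcases le_total n m with hle | hle
  · by_contra hne
    have hpre : (St8.q4 :: List.replicate n St8.q4) <+: (St8.q4 :: List.replicate m St8.q4) := by
      refine ⟨List.replicate (m - n) St8.q4, ?_⟩
      rw [List.cons_append, ← List.replicate_add]
      congr 2
      omega
    exact h2.2.2 _ hpre (by simp) hne h1.2.1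
  · by_contra hne
    have hpre : (St8.q4 :: List.replicate m St8.q4) <+: (St8.q4 :: List.replicate n St8.q4) := by
      refine ⟨List.replicate (n - m) St8.q4, ?_⟩
      rw [List.cons_append, ← List.replicate_add]
      congr 2
      omega
    exact h1.2.2 _ hpre (by simp) (fun h => hne h.symm) h2.2.1

/-- Upper bound on the reach probability of any goal set from `[q1]`. -/
lemma reach_q1_le (fp : M8.toMDP.Policy) (Tgt : Set (List St8))
    (hT : ∀ (h : List St8) (x : St8), h.getLast? = some x → h ∈ Tgt →
      x = St8.s0 ∨ x = St8.q4) :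
    reachP M8.toMDP.K fp.f [St8.q1] Tgt ≤ 0.2 := by
  classical
  rw [reachP]
  by_cases hz : ∀ b : {u // IsFirstHit Tgt [St8.q1] u},
      contP M8.toMDP.K fp.f [St8.q1] b.1 = 0
  · rw [tsum_congr hz, tsum_zero]
    norm_num
  · push_neg at hz
    obtain ⟨b0, hb0⟩ := hz
    obtain ⟨n0, hn0⟩ := charD fp Tgt hT b0.1 b0.2 hb0
    have huniq : ∀ b : {u // IsFirstHit Tgt [St8.q1] u},
        contP M8.toMDP.K fp.f [St8.q1] b.1 ≠ 0 → b = b0 := by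
      intro b hbne
      obtain ⟨n, hn⟩ := charD fp Tgt hT b.1 b.2 hbne
      apply Subtype.ext
      rw [hn, hn0]
      exact rep_unique Tgt (hn ▸ b.2) (hn0 ▸ b0.2)
    rw [tsum_eq_single b0 (fun b' hne => by_contra fun h0 => hne (huniq b' h0))]
    have : contP M8.toMDP.K fp.f [St8.q1] b0.1 = 0.2 := by
      rw [hn0, contP_cons, stepP_eq fp (show [St8.q1].getLast? = some St8.q1 from rfl),
        contP_rep fp n0 _ (last_concat [St8.q1] St8.q4)]
      norm_num [tbl]
    rw [this]



lemma wf : M8.toMDP.WellFormed := by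
  constructor
  · intro s a d hd
    have hd' : P8 s a = some d := hd
    cases s <;>
      simp only [P8, Option.some.injEq] at hd' <;>
      subst hd' <;>
      refine ⟨fun s' => by cases s' <;> simp [d1, d2] <;> norm_num, ?_⟩ <;>
      simp [d1, d2, Finset.sum_add_distrib, Finset.sum_ite_eq'] <;>
      norm_num
  · intro s
    exact ⟨(), by cases s <;> simp [M8, P8]⟩

noncomputable def fp0 : M8.toMDP.Policy where
  f := fun _ _ => 1
  nonneg := fun _ _ => zero_le_one
  sum_one := fun h => by simp
  support := fun h s a _ hP => by
    exfalso
    have hP' : P8 s a = none := hP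
    cases s <;> simp [P8] at hP'

lemma part_i : ∃ (fp : M8.toMDP.Policy) (l : List St8 → ℕ) (l' : List St8 → Bool),
    RiskAverseFrom M8 fp l l' 0.68 St8.s0 := by
  refine ⟨fp0, fun _ => 2, fun h => decide (h.getLast? = some St8.q4), ?_⟩
  have hset : {h : List St8 | decide (h.getLast? = some St8.q4) = true}
      = {h : List St8 | h.getLast? = some St8.q4} := by
    ext h; simp
  constructor
  · refine ⟨0, fun π _ _ n => ?_⟩
    simp
  · intro h
    norm_num
  · intro h s hl hll
    simp only [decide_eq_true_eq] at hll
    rw [hl] at hll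
    have hs : s = St8.q4 := Option.some.inj hll
    subst hs
    exact ⟨by norm_num [M8, C8], by norm_num [M8, C8]⟩
  · intro h s hl hodd
    cases s <;> simp_all [M8, C8, Nat.odd_iff]
  · intro t ht hcase
    rcases hcase with rfl | hl'
    · rw [hset, reach_s0_q4 fp0]
    · simp only [decide_eq_true_eq] at hl'
      rw [hset, reach_from_q4 fp0 t hl']
      norm_num

lemma part_vi : ¬ ∃ (fp : M8.toMDP.Policy) (l : List St8 → ℕ) (l' : List St8 → Bool),
    RiskAverseFrom M8 fp l l' 0.68 St8.q1 := by
  rintro ⟨fp, l, l', ra⟩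
  have hr := ra.reach_goal [St8.q1] rfl (Or.inl rfl)
  have hT : ∀ (h : List St8) (x : St8), h.getLast? = some x →
      h ∈ {h : List St8 | l' h = true} → x = St8.s0 ∨ x = St8.q4 := by
    intro h x hx hh
    have he := (ra.goal_label h x hx hh).2
    cases x
    · exact Or.inl rfl
    · exact absurd he (by norm_num [M8, C8, Nat.even_iff])
    · exact absurd he (by norm_num [M8, C8, Nat.even_iff])
    · exact absurd he (by norm_num [M8, C8, Nat.even_iff])
    · exact Or.inr rfl
  have hb := reach_q1_le fp {h | l' h = true} hT
  linarith



end Ex8proof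

/-- In the parity MDP of Figure 2: the MDP is well-formed; (i) it admits
a `0.68`-risk-averse policy from `s0` (and the probability of reaching `q4` from `s0` is
`0.2·0.2 + 0.8·0.8 = 0.68` under any policy); (ii) under any policy, `q1` is reached from
`s0` with positive probability; (iii) the probability of reaching `q4` from `q1` is only
`0.2`, and `q1` admits no `0.68`-risk-averse policy as initial state. -/


theorem example_nonWinning_state_reached :
    M8.toMDP.WellFormed ∧
    (∃ (fp : M8.toMDP.Policy) (l : List St8 → ℕ) (l' : List St8 → Bool),
      RiskAverseFrom M8 fp l l' 0.68 St8.s0) ∧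
    (∀ fp : M8.toMDP.Policy,
      reachP M8.toMDP.K fp.f [St8.s0] {h | h.getLast? = some St8.q4} = 0.68) ∧
    (∀ fp : M8.toMDP.Policy,
      0 < reachP M8.toMDP.K fp.f [St8.s0] {h | h.getLast? = some St8.q1}) ∧
    (∀ fp : M8.toMDP.Policy,
      reachP M8.toMDP.K fp.f [St8.q1] {h | h.getLast? = some St8.q4} = 0.2) ∧
    ¬ ∃ (fp : M8.toMDP.Policy) (l : List St8 → ℕ) (l' : List St8 → Bool),
      RiskAverseFrom M8 fp l l' 0.68 St8.q1 := by
  refine ⟨Ex8proof.wf, Ex8proof.part_i, Ex8proof.reach_s0_q4, ?_,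
    Ex8proof.reach_q1_q4, Ex8proof.part_vi⟩
  intro fp
  rw [Ex8proof.reach_s0_q1 fp]
  norm_num
end
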